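/- arXiv:1304.4481 — 4 statements merged into one kernel-verified Lean document; each statement's English description precedes it below -/
import Mathlib

section
/- Let R be a ring and M a left R-module. Suppose S₁ and S₂ are rings such that M carries an S₁-module structure and an S₂-module structure, each commuting with the R-action, and E₁, E₂ are injective cogenerators of the categories of S₁-modules and S₂-modules respectively. Then the dual Hom_{S₁}(M, E₁) is isomorphic, as a right R-module, to a direct summand of a direct product of copies of the dual Hom_{S₂}(M, E₂); consequently Prod(Hom_{S₁}(M, E₁)) = Prod(Hom_{S₂}(M, E₂)). -/
universe u

open MulOpposite DirectSum

noncomputable section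

/-- The additive group `ℚ/ℤ`. -/
abbrev RatCircle : Type := AddCircle (1 : ℚ)

/-- The character group `Hom_ℤ(M, ℚ/ℤ)` of an abelian group `M`. -/
def Character (M : Type u) [AddCommGroup M] : Type u := M →+ RatCircle

namespace Character

instance instAddCommGroup (M : Type u) [AddCommGroup M] : AddCommGroup (Character M) :=
  inferInstanceAs (AddCommGroup (M →+ RatCircle))

instance instFunLike (M : Type u) [AddCommGroup M] : FunLike (Character M) M RatCircle :=
  inferInstanceAs (FunLike (M →+ RatCircle) M RatCircle)

instance instAddMonoidHomClass (M : Type u) [AddCommGroup M] :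
    AddMonoidHomClass (Character M) M RatCircle :=
  inferInstanceAs (AddMonoidHomClass (M →+ RatCircle) M RatCircle)

@[ext] lemma ext {M : Type u} [AddCommGroup M] {f g : Character M}
    (h : ∀ m, f m = g m) : f = g := DFunLike.ext _ _ h

variable {R : Type u} [Ring R]

/-- If `M` is a left `R`-module then `Character M` is a right `R`-module,
via `(f • r) m = f (r • m)`. -/
instance instSMulRight {M : Type u} [AddCommGroup M] [Module R M] :
    SMul Rᵐᵒᵖ (Character M) where
  smul r f :=
    ((f : M →+ RatCircle).comp (DistribMulAction.toAddMonoidHom M r.unop) : M →+ RatCircle)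

lemma smul_right_apply {M : Type u} [AddCommGroup M] [Module R M]
    (r : Rᵐᵒᵖ) (f : Character M) (m : M) : (r • f) m = f (r.unop • m) := rfl

instance moduleRight {M : Type u} [AddCommGroup M] [Module R M] :
    Module Rᵐᵒᵖ (Character M) where
  one_smul f := ext fun m => by rw [smul_right_apply, unop_one, one_smul]
  mul_smul r s f := ext fun m => by
    rw [smul_right_apply, smul_right_apply, smul_right_apply, unop_mul, mul_smul]
  smul_zero r := ext fun m => rfl
  smul_add r f g := ext fun m => rfl
  add_smul r s f := ext fun m => by
    show f ((r + s).unop • m) = f (r.unop • m) + f (s.unop • m)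
    rw [unop_add, add_smul, map_add]
  zero_smul f := ext fun m => by
    show f ((0 : Rᵐᵒᵖ).unop • m) = 0
    rw [unop_zero, zero_smul, map_zero]

/-- If `M` is a right `R`-module then `Character M` is a left `R`-module,
via `(r • f) m = f (m • r)`. -/
instance instSMulLeft {M : Type u} [AddCommGroup M] [Module Rᵐᵒᵖ M] :
    SMul R (Character M) where
  smul r f :=
    ((f : M →+ RatCircle).comp (DistribMulAction.toAddMonoidHom M (op r)) : M →+ RatCircle)

lemma smul_left_apply {M : Type u} [AddCommGroup M] [Module Rᵐᵒᵖ M]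
    (r : R) (f : Character M) (m : M) : (r • f) m = f (op r • m) := rfl

instance moduleLeft {M : Type u} [AddCommGroup M] [Module Rᵐᵒᵖ M] :
    Module R (Character M) where
  one_smul f := ext fun m => by rw [smul_left_apply, op_one, one_smul]
  mul_smul r s f := ext fun m => by
    rw [smul_left_apply, smul_left_apply, smul_left_apply, op_mul, mul_smul]
  smul_zero r := ext fun m => rfl
  smul_add r f g := ext fun m => rfl
  add_smul r s f := ext fun m => by
    show f (op (r + s) • m) = f (op r • m) + f (op s • m)
    rw [op_add, add_smul, map_add]
  zero_smul f := ext fun m => by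
    show f (op (0 : R) • m) = 0
    rw [op_zero, zero_smul, map_zero]

end Character

section Defs

variable (A : Type u) [Ring A]

/-- A pure embedding: an injective linear map such that every finite system of
linear equations with constants in `L` solvable in `M` is solvable in `L`. -/
def IsPureEmbedding {L M : Type u} [AddCommGroup L] [AddCommGroup M]
    [Module A L] [Module A M] (i : L →ₗ[A] M) : Prop :=
  Function.Injective i ∧
    ∀ (m n : ℕ) (r : Matrix (Fin m) (Fin n) A) (l : Fin m → L),
      (∃ x : Fin n → M, ∀ j, (∑ k, r j k • x k) = i (l j)) →
      ∃ y : Fin n → L, ∀ j, (∑ k, r j k • y k) = l j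

/-- A module is pure-injective if every pure embedding out of it splits. -/
def IsPureInjective (N : Type u) [AddCommGroup N] [Module A N] : Prop :=
  ∀ (M : Type u) [AddCommGroup M] [Module A M] (i : N →ₗ[A] M),
    IsPureEmbedding A i → ∃ π : M →ₗ[A] N, π.comp i = LinearMap.id

/-- `N` is (isomorphic to) a direct summand of `N'`. -/
def IsDirectSummand (N N' : Type u) [AddCommGroup N] [AddCommGroup N']
    [Module A N] [Module A N'] : Prop :=
  ∃ (i : N →ₗ[A] N') (π : N' →ₗ[A] N), π.comp i = LinearMap.id

/-- A module is indecomposable if it is nonzero and is not the internal direct sum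
of two nonzero submodules. -/
def IsIndecomposable (N : Type u) [AddCommGroup N] [Module A N] : Prop :=
  (∃ x : N, x ≠ 0) ∧ ∀ U V : Submodule A N, U ≠ ⊥ → V ≠ ⊥ → ¬ IsCompl U V

/-- An injective module: every linear map from a submodule of a module `B` into `E`
extends to `B`. -/
def IsInjectiveModule (E : Type u) [AddCommGroup E] [Module A E] : Prop :=
  ∀ (B : Type u) [AddCommGroup B] [Module A B] (L : Submodule A B) (g : L →ₗ[A] E),
    ∃ h : B →ₗ[A] E, ∀ x : L, h x = g x

/-- A cogenerator: points of any module are separated by maps into `E`. -/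
def IsCogenerator (E : Type u) [AddCommGroup E] [Module A E] : Prop :=
  ∀ (X : Type u) [AddCommGroup X] [Module A X] (x : X), x ≠ 0 →
    ∃ g : X →ₗ[A] E, g x ≠ 0

/-- A class of modules is closed under (arbitrary) direct products. -/
def ProdClosed (C : ModuleCat.{u} A → Prop) : Prop :=
  ∀ (ι : Type u) (f : ι → ModuleCat.{u} A), (∀ i, C (f i)) →
    C (ModuleCat.of A (∀ i, (f i : Type u)))

/-- A class of modules is closed under modules purely embedding into its members. -/
def PureSubClosed (C : ModuleCat.{u} A → Prop) : Prop :=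
  ∀ (N M : ModuleCat.{u} A) (i : N →ₗ[A] M), IsPureEmbedding A i → C M → C N

/-- A class of modules is closed under colimits of directed systems. -/
def DirLimClosed (C : ModuleCat.{u} A → Prop) : Prop :=
  ∀ (ι : Type u) [Preorder ι] [IsDirected ι (· ≤ ·)] [Nonempty ι] [DecidableEq ι]
    (G : ι → Type u) [∀ i, AddCommGroup (G i)] [∀ i, Module A (G i)]
    (f : ∀ i j, i ≤ j → G i →ₗ[A] G j) [DirectedSystem G (fun i j h => f i j h)],
    (∀ i, C (ModuleCat.of A (G i))) → C (ModuleCat.of A (Module.DirectLimit G f))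

/-- A definable subcategory: a class of modules (closed under isomorphism) which is closed
under direct products, colimits of directed systems, and pure submodules. -/
def IsDefinable (C : ModuleCat.{u} A → Prop) : Prop :=
  ProdClosed A C ∧ DirLimClosed A C ∧ PureSubClosed A C

end Defs


section DualMod

variable (S : Type u) [Ring S] (E : Type u) [AddCommGroup E] [Module S E]
variable (M : Type u) [AddCommGroup M] [Module S M]

/-- The dual `Hom_S(M, E)` of `M` with respect to the pair `(S, E)`. -/
def DualMod : Type u := M →ₗ[S] E

instance DualMod.instAddCommGroup : AddCommGroup (DualMod S E M) :=
  inferInstanceAs (AddCommGroup (M →ₗ[S] E))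

instance DualMod.instFunLike : FunLike (DualMod S E M) M E :=
  inferInstanceAs (FunLike (M →ₗ[S] E) M E)

instance DualMod.instLinearMapClass : LinearMapClass (DualMod S E M) S M E :=
  inferInstanceAs (LinearMapClass (M →ₗ[S] E) S M E)

@[ext] lemma DualMod.ext {f g : DualMod S E M} (h : ∀ m, f m = g m) : f = g :=
  DFunLike.ext _ _ h

variable {R : Type u} [Ring R] [Module R M] [SMulCommClass S R M]

/-- The action of `r : R` on `M` as an `S`-linear endomorphism. -/
def DualMod.scalarMap (r : R) : M →ₗ[S] M where
  toFun m := r • m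
  map_add' := smul_add r
  map_smul' s m := (smul_comm s r m).symm

/-- The dual `Hom_S(M, E)` of a left `R`-module `M` is a right `R`-module,
via `(f • r) m = f (r • m)`. -/
instance DualMod.instSMulRight : SMul Rᵐᵒᵖ (DualMod S E M) where
  smul r f := ((f : M →ₗ[S] E).comp (DualMod.scalarMap S M r.unop) : M →ₗ[S] E)

lemma DualMod.smul_right_apply (r : Rᵐᵒᵖ) (f : DualMod S E M) (m : M) :
    (r • f) m = f (r.unop • m) := rfl

instance DualMod.moduleRight : Module Rᵐᵒᵖ (DualMod S E M) where
  one_smul f := DualMod.ext _ _ _ fun m => by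
    rw [DualMod.smul_right_apply, unop_one, one_smul]
  mul_smul r s f := DualMod.ext _ _ _ fun m => by
    rw [DualMod.smul_right_apply, DualMod.smul_right_apply, DualMod.smul_right_apply,
      unop_mul, mul_smul]
  smul_zero r := DualMod.ext _ _ _ fun m => rfl
  smul_add r f g := DualMod.ext _ _ _ fun m => rfl
  add_smul r s f := DualMod.ext _ _ _ fun m => by
    show (f : M →ₗ[S] E) ((r + s).unop • m)
      = (f : M →ₗ[S] E) (r.unop • m) + (f : M →ₗ[S] E) (s.unop • m)
    rw [unop_add, add_smul, map_add]
  zero_smul f := DualMod.ext _ _ _ fun m => by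
    show (f : M →ₗ[S] E) ((0 : Rᵐᵒᵖ).unop • m) = 0
    rw [unop_zero, zero_smul, map_zero]

end DualMod

section Aux

open MulOpposite
noncomputable section AuxS

variable {A : Type u} [Ring A]

theorem summand_trans {N N' N'' : Type u} [AddCommGroup N] [AddCommGroup N'] [AddCommGroup N'']
    [Module A N] [Module A N'] [Module A N'']
    (h1 : IsDirectSummand A N N') (h2 : IsDirectSummand A N' N'') : IsDirectSummand A N N'' := by
  obtain ⟨i1, p1, h1⟩ := h1
  obtain ⟨i2, p2, h2⟩ := h2
  refine ⟨i2.comp i1, p1.comp p2, ?_⟩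
  ext x
  have e2 : p2 (i2 (i1 x)) = i1 x := LinearMap.congr_fun h2 (i1 x)
  have e1 : p1 (i1 x) = x := LinearMap.congr_fun h1 x
  simp [LinearMap.comp_apply, e2, e1]

theorem summand_pi {P Q : Type u} [AddCommGroup P] [AddCommGroup Q] [Module A P] [Module A Q]
    (ι : Type u) (h : IsDirectSummand A P Q) : IsDirectSummand A (ι → P) (ι → Q) := by
  obtain ⟨i, p, hpi⟩ := h
  refine ⟨i.compLeft ι, p.compLeft ι, ?_⟩
  ext g a
  exact LinearMap.congr_fun hpi (g a)

theorem summand_of_equiv {P Q : Type u} [AddCommGroup P] [AddCommGroup Q] [Module A P] [Module A Q]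
    (e : P ≃ₗ[A] Q) : IsDirectSummand A P Q := by
  refine ⟨e.toLinearMap, e.symm.toLinearMap, ?_⟩
  ext x; simp

theorem summand_pi_trans {N P Q : Type u} [AddCommGroup N] [AddCommGroup P] [AddCommGroup Q]
    [Module A N] [Module A P] [Module A Q] {ι τ : Type u}
    (h1 : IsDirectSummand A N (ι → P)) (h2 : IsDirectSummand A P (τ → Q)) :
    IsDirectSummand A N ((ι × τ) → Q) :=
  summand_trans h1 (summand_trans (summand_pi ι h2)
    (summand_of_equiv (LinearEquiv.curry A Q ι τ).symm))

end AuxS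
end Aux

section DualAux

variable {R S : Type u} [Ring R] [Ring S]
variable (M : Type u) [AddCommGroup M] [Module R M] [Module S M] [SMulCommClass S R M]

/-- If `E` is a direct summand of `κ → F` over `S`, then `Hom_S(M,E)` is a direct summand
of `κ → Hom_S(M,F)` as right `R`-modules. -/
theorem dualMod_summand {E F : Type u} [AddCommGroup E] [Module S E]
    [AddCommGroup F] [Module S F] {κ : Type u}
    (i : E →ₗ[S] (κ → F)) (p : (κ → F) →ₗ[S] E) (hpi : p.comp i = LinearMap.id) :
    IsDirectSummand Rᵐᵒᵖ (DualMod S E M) (κ → DualMod S F M) := by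
  refine ⟨⟨⟨fun f k => ((LinearMap.proj k).comp (i.comp (f : M →ₗ[S] E)) : M →ₗ[S] F), ?_⟩, ?_⟩,
          ⟨⟨fun g => (p.comp (LinearMap.pi fun k => (g k : M →ₗ[S] F)) : M →ₗ[S] E), ?_⟩, ?_⟩, ?_⟩
  · intro f g
    funext k
    exact DualMod.ext _ _ _ fun m => by
      show i ((f + g : M →ₗ[S] E) m) k = i ((f : M →ₗ[S] E) m) k + i ((g : M →ₗ[S] E) m) k
      exact congrFun (map_add i ((f : M →ₗ[S] E) m) ((g : M →ₗ[S] E) m)) k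
  · intro r f; rfl
  · intro g g'
    exact DualMod.ext _ _ _ fun m => by
      show p (fun k => ((g + g') k : M →ₗ[S] F) m) = p (fun k => (g k : M →ₗ[S] F) m) + p (fun k => (g' k : M →ₗ[S] F) m)
      rw [← map_add]; rfl
  · intro r g; rfl
  · ext f m
    show p (fun k => i ((f : M →ₗ[S] E) m) k) = (f : M →ₗ[S] E) m
    exact LinearMap.congr_fun hpi ((f : M →ₗ[S] E) m)

/-- If `E` is injective and `F` is a cogenerator, then `E` is a direct summand of a
product of copies of `F`. -/
theorem injective_summand_of_cogenerator {E F : Type u} [AddCommGroup E] [Module S E]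
    [AddCommGroup F] [Module S F]
    (hE : IsInjectiveModule S E) (hF : IsCogenerator S F) :
    ∃ (κ : Type u) (i : E →ₗ[S] (κ → F)) (p : (κ → F) →ₗ[S] E), p.comp i = LinearMap.id := by
  classical
  set κ := (E →ₗ[S] F) with hκ
  set i : E →ₗ[S] (κ → F) := LinearMap.pi (fun g => g) with hi
  have hinj : Function.Injective i := by
    intro x y hxy
    by_contra hne
    obtain ⟨g, hg⟩ := hF E (x - y) (sub_ne_zero.mpr hne)
    apply hg
    have : i x g = i y g := by rw [hxy]
    simpa [map_sub, sub_eq_zero] using (sub_eq_zero.mpr this : g x - g y = 0)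
  let e := LinearEquiv.ofInjective i hinj
  obtain ⟨h, hh⟩ := hE (κ → F) (LinearMap.range i) e.symm.toLinearMap
  refine ⟨κ, i, h, ?_⟩
  ext x
  have hmem : i x ∈ LinearMap.range i := ⟨x, rfl⟩
  have : h (i x) = e.symm ⟨i x, hmem⟩ := hh ⟨i x, hmem⟩
  rw [LinearMap.comp_apply, this, LinearMap.id_apply]
  have : (⟨i x, hmem⟩ : LinearMap.range i) = e x := by
    apply Subtype.ext
    simp [e]
  rw [this, e.symm_apply_apply]

end DualAux

section CharAux

variable {S : Type u} [Ring S]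

/-- `Character S` (with its left `S`-module structure) is an injective `S`-module. -/
theorem charS_injective : IsInjectiveModule S (Character S) := by
  intro B _ _ L g
  let γ : CharacterModule L :=
    AddMonoidHom.mk' (fun x => g x (1 : S)) (fun a b => by
      show (g (a + b)) (1 : S) = (g a) (1 : S) + (g b) (1 : S); rw [map_add]; rfl)
  have hf : Function.Injective (L.subtype.toAddMonoidHom.toIntLinearMap) :=
    Subtype.val_injective
  obtain ⟨Γ, hΓ⟩ := CharacterModule.dual_surjective_of_injective _ hf γ
  have hΓ' : ∀ x : L, Γ (x : B) = γ x := fun x => congrFun (congrArg DFunLike.coe hΓ) x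
  refine ⟨{ toFun := fun b => AddMonoidHom.mk' (fun s => Γ (s • b))
              (fun s t => by show Γ ((s + t) • b) = Γ (s • b) + Γ (t • b); rw [add_smul, map_add]),
            map_add' := fun b b' => Character.ext fun s => by
              show Γ (s • (b + b')) = Γ (s • b) + Γ (s • b')
              rw [smul_add, map_add],
            map_smul' := fun s b => Character.ext fun t => by
              show Γ (t • s • b) = Γ ((op s • t) • b)
              rw [MulOpposite.smul_eq_mul_unop, unop_op, mul_smul] }, ?_⟩
  intro x
  refine Character.ext fun s => ?_
  show Γ (s • (x : B)) = g x s
  have : s • (x : B) = ((s • x : L) : B) := rfl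
  rw [this, hΓ' (s • x)]
  show g (s • x) (1 : S) = g x s
  rw [map_smul]
  show (g x) (op s • (1 : S)) = g x s
  rw [MulOpposite.smul_eq_mul_unop, unop_op, one_mul]

/-- `Character S` is a cogenerator for `S`-modules. -/
theorem charS_cogenerator : IsCogenerator S (Character S) := by
  intro X _ _ x hx
  obtain ⟨c, hc⟩ := CharacterModule.exists_character_apply_ne_zero_of_ne_zero hx
  refine ⟨{ toFun := fun y => AddMonoidHom.mk' (fun s => c (s • y))
              (fun s t => by show c ((s + t) • y) = c (s • y) + c (t • y); rw [add_smul, map_add]),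
            map_add' := fun y y' => Character.ext fun s => by
              show c (s • (y + y')) = c (s • y) + c (s • y')
              rw [smul_add, map_add],
            map_smul' := fun s y => Character.ext fun t => by
              show c (t • s • y) = c ((op s • t) • y)
              rw [MulOpposite.smul_eq_mul_unop, unop_op, mul_smul] }, ?_⟩
  intro h
  apply hc
  have : c ((1 : S) • x) = 0 := congrFun (congrArg DFunLike.coe h) (1 : S)
  rwa [one_smul] at this

end CharAux

section CharEquiv

variable {R S : Type u} [Ring R] [Ring S]
variable (M : Type u) [AddCommGroup M] [Module R M] [Module S M] [SMulCommClass S R M]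

/-- `Hom_S(M, Character S) ≅ Character M` as right `R`-modules. -/
def dualCharEquiv : DualMod S (Character S) M ≃ₗ[Rᵐᵒᵖ] Character M where
  toFun f := AddMonoidHom.mk' (fun m => (f : M →ₗ[S] Character S) m (1 : S))
    (fun a b => by
      show ((f : M →ₗ[S] Character S) (a + b)) (1 : S)
        = ((f : M →ₗ[S] Character S) a) (1 : S) + ((f : M →ₗ[S] Character S) b) (1 : S)
      rw [map_add]; rfl)
  invFun χ :=
    ({ toFun := fun m => AddMonoidHom.mk' (fun s => χ (s • m))
          (fun s t => by show χ ((s + t) • m) = χ (s • m) + χ (t • m); rw [add_smul, map_add]),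
       map_add' := fun m m' => Character.ext fun s => by
          show χ (s • (m + m')) = χ (s • m) + χ (s • m')
          rw [smul_add, map_add],
       map_smul' := fun s m => Character.ext fun t => by
          show χ (t • s • m) = χ ((op s • t) • m)
          rw [MulOpposite.smul_eq_mul_unop, unop_op, mul_smul] } : M →ₗ[S] Character S)
  map_add' f g := Character.ext fun m => rfl
  map_smul' r f := Character.ext fun m => rfl
  left_inv f := DualMod.ext _ _ _ fun m => Character.ext fun s => by
    show (f : M →ₗ[S] Character S) (s • m) (1 : S) = (f : M →ₗ[S] Character S) m s
    rw [map_smul]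
    show ((f : M →ₗ[S] Character S) m) (op s • (1 : S)) = (f : M →ₗ[S] Character S) m s
    rw [MulOpposite.smul_eq_mul_unop, unop_op, one_mul]
  right_inv χ := Character.ext fun m => by
    show χ ((1 : S) • m) = χ m
    rw [one_smul]

end CharEquiv

section MainAux

variable {R : Type u} [Ring R]
variable (M : Type u) [AddCommGroup M] [Module R M]

theorem dual_summand_char (S : Type u) [Ring S] [Module S M] [SMulCommClass S R M]
    (E : Type u) [AddCommGroup E] [Module S E]
    (hinj : IsInjectiveModule S E) (hcog : IsCogenerator S E) :
    (∃ κ : Type u, IsDirectSummand Rᵐᵒᵖ (DualMod S E M) (κ → Character M)) ∧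
    (∃ κ : Type u, IsDirectSummand Rᵐᵒᵖ (Character M) (κ → DualMod S E M)) := by
  constructor
  · obtain ⟨κ, i, p, hpi⟩ := injective_summand_of_cogenerator hinj (charS_cogenerator (S := S))
    exact ⟨κ, summand_trans (dualMod_summand M i p hpi)
      (summand_pi κ (summand_of_equiv (dualCharEquiv (R := R) (S := S) M)))⟩
  · obtain ⟨κ, i, p, hpi⟩ := injective_summand_of_cogenerator (charS_injective (S := S)) hcog
    exact ⟨κ, summand_trans (summand_of_equiv (dualCharEquiv (R := R) (S := S) M).symm)
      (dualMod_summand M i p hpi)⟩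

end MainAux

theorem dualities_give_same_Prod
    {R S₁ S₂ : Type u} [Ring R] [Ring S₁] [Ring S₂]
    (M : Type u) [AddCommGroup M] [Module R M]
    [Module S₁ M] [SMulCommClass S₁ R M]
    [Module S₂ M] [SMulCommClass S₂ R M]
    (E₁ : Type u) [AddCommGroup E₁] [Module S₁ E₁]
    (E₂ : Type u) [AddCommGroup E₂] [Module S₂ E₂]
    (hE₁inj : IsInjectiveModule S₁ E₁) (hE₁cog : IsCogenerator S₁ E₁)
    (hE₂inj : IsInjectiveModule S₂ E₂) (hE₂cog : IsCogenerator S₂ E₂) :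
    (∃ ι : Type u, IsDirectSummand Rᵐᵒᵖ (DualMod S₁ E₁ M) (ι → DualMod S₂ E₂ M)) ∧
    (∀ N : ModuleCat.{u} Rᵐᵒᵖ,
      (∃ ι : Type u, IsDirectSummand Rᵐᵒᵖ (N : Type u) (ι → DualMod S₁ E₁ M)) ↔
      (∃ ι : Type u, IsDirectSummand Rᵐᵒᵖ (N : Type u) (ι → DualMod S₂ E₂ M))) := by

  have H1 := dual_summand_char (R := R) M S₁ E₁ hE₁inj hE₁cog
  have H2 := dual_summand_char (R := R) M S₂ E₂ hE₂inj hE₂cog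
  have key12 : ∃ τ : Type u, IsDirectSummand Rᵐᵒᵖ (DualMod S₁ E₁ M) (τ → DualMod S₂ E₂ M) := by
    obtain ⟨κ₁, h1⟩ := H1.1
    obtain ⟨κ₂, h2⟩ := H2.2
    exact ⟨κ₁ × κ₂, summand_pi_trans h1 h2⟩
  have key21 : ∃ τ : Type u, IsDirectSummand Rᵐᵒᵖ (DualMod S₂ E₂ M) (τ → DualMod S₁ E₁ M) := by
    obtain ⟨κ₁, h1⟩ := H2.1
    obtain ⟨κ₂, h2⟩ := H1.2
    exact ⟨κ₁ × κ₂, summand_pi_trans h1 h2⟩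
  refine ⟨key12, fun N => ⟨?_, ?_⟩⟩
  · rintro ⟨ι, hN⟩
    obtain ⟨τ, hD⟩ := key12
    exact ⟨ι × τ, summand_pi_trans hN hD⟩
  · rintro ⟨ι, hN⟩
    obtain ⟨τ, hD⟩ := key21
    exact ⟨ι × τ, summand_pi_trans hN hD⟩


end
end

section
/- Let K be a field and R = K⟨X, Y⟩ the free associative K-algebra on two generators. Then R is a domain and R has no uniform right ideal: for every nonzero right ideal I of R there exist nonzero right ideals J₁, J₂ of R contained in I with J₁ ∩ J₂ = 0. -/
universe u

open MulOpposite DirectSum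

noncomputable section

lemma key_monoid_alg {K : Type u} [Field K] {i j : Fin 2} (hij : i ≠ j)
    (f g : MonoidAlgebra K (FreeMonoid (Fin 2)))
    (h : MonoidAlgebra.single (FreeMonoid.of i) (1:K) * f
       = MonoidAlgebra.single (FreeMonoid.of j) (1:K) * g) : f = 0 := by
  ext w
  have h1 : (MonoidAlgebra.single (FreeMonoid.of i) (1:K) * f).coeff (FreeMonoid.of i * w) = f.coeff w := by
    rw [MonoidAlgebra.coeff_single_mul_eq_mul_coeff (x := f) w (fun a _ => ?_), one_mul]
    constructor
    · intro hh
      have := congrArg FreeMonoid.toList hh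
      simpa using this
    · rintro rfl; rfl
  have h2 : (MonoidAlgebra.single (FreeMonoid.of j) (1:K) * g).coeff (FreeMonoid.of i * w) = 0 := by
    apply MonoidAlgebra.single_mul_apply_of_not_exists_mul
    rintro ⟨d, hd⟩
    have := congrArg FreeMonoid.toList hd
    simp [FreeMonoid.toList_mul] at this
    exact hij this.1
  rw [h, h2] at h1
  simp [h1.symm]

lemma key_free_alg {K : Type u} [Field K] {i j : Fin 2} (hij : i ≠ j)
    (f g : FreeAlgebra K (Fin 2))
    (h : FreeAlgebra.ι K i * f = FreeAlgebra.ι K j * g) : f = 0 := by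
  let e := FreeAlgebra.equivMonoidAlgebraFreeMonoid (R := K) (X := Fin 2)
  have he : ∀ x : Fin 2, e (FreeAlgebra.ι K x)
      = MonoidAlgebra.single (FreeMonoid.of x) (1:K) := by
    intro x
    simp [e, FreeAlgebra.equivMonoidAlgebraFreeMonoid]
  have := congrArg e h
  rw [map_mul, map_mul, he, he] at this
  have hf : e f = 0 := key_monoid_alg hij (e f) (e g) this
  simpa using congrArg e.symm hf

theorem free_algebra_domain_no_uniform_right_ideal (K : Type u) [Field K] :
    IsDomain (FreeAlgebra K (Fin 2)) ∧
    ∀ I : Submodule (FreeAlgebra K (Fin 2))ᵐᵒᵖ (FreeAlgebra K (Fin 2)), I ≠ ⊥ →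
      ∃ J₁ J₂ : Submodule (FreeAlgebra K (Fin 2))ᵐᵒᵖ (FreeAlgebra K (Fin 2)),
        J₁ ≤ I ∧ J₂ ≤ I ∧ J₁ ≠ ⊥ ∧ J₂ ≠ ⊥ ∧ J₁ ⊓ J₂ = ⊥ := by
  constructor
  · infer_instance
  · intro I hI
    obtain ⟨a, haI, ha⟩ := Submodule.exists_mem_ne_zero_of_ne_bot hI
    set X := FreeAlgebra.ι K (0 : Fin 2) with hX
    set Y := FreeAlgebra.ι K (1 : Fin 2) with hY
    have hX0 : X ≠ 0 := FreeAlgebra.ι_ne_zero _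
    have hY0 : Y ≠ 0 := FreeAlgebra.ι_ne_zero _
    refine ⟨Submodule.span (FreeAlgebra K (Fin 2))ᵐᵒᵖ {a * X}, Submodule.span (FreeAlgebra K (Fin 2))ᵐᵒᵖ {a * Y}, ?_, ?_, ?_, ?_, ?_⟩
    · rw [Submodule.span_le, Set.singleton_subset_iff]
      have : a * X = op X • a := by rw [op_smul_eq_mul]
      rw [this]
      exact Submodule.smul_mem I _ haI
    · rw [Submodule.span_le, Set.singleton_subset_iff]
      have : a * Y = op Y • a := by rw [op_smul_eq_mul]
      rw [this]
      exact Submodule.smul_mem I _ haI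
    · rw [Ne, Submodule.span_singleton_eq_bot]
      exact mul_ne_zero ha hX0
    · rw [Ne, Submodule.span_singleton_eq_bot]
      exact mul_ne_zero ha hY0
    · rw [eq_bot_iff]
      rintro x ⟨hx1, hx2⟩
      obtain ⟨r, hr⟩ := Submodule.mem_span_singleton.mp hx1
      obtain ⟨s, hs⟩ := Submodule.mem_span_singleton.mp hx2
      have hr' : x = a * (X * r.unop) := by
        rw [← hr, MulOpposite.smul_eq_mul_unop, mul_assoc]
      have hs' : x = a * (Y * s.unop) := by
        rw [← hs, MulOpposite.smul_eq_mul_unop, mul_assoc]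
      have hc : X * r.unop = Y * s.unop := mul_left_cancel₀ ha (hr'.symm.trans hs')
      have : r.unop = 0 := key_free_alg (by decide) _ _ hc
      rw [hr', this, mul_zero, mul_zero]
      exact Submodule.zero_mem ⊥


end
end

section
/- Let K be a field, let R = K⟨X, Y⟩ be the free associative K-algebra on two generators, and let E be a right R-module which is injective and contains R as an essential submodule (i.e. there is an embedding of R into E whose image meets every nonzero submodule of E nontrivially). Then for every set I, every nonzero direct summand of the direct product E^I is decomposable; in particular no direct product of copies of E, and in particular E itself, has an indecomposable direct summand. -/
universe u

open MulOpposite DirectSum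

noncomputable section

section AuxProof

lemma free_indep (K : Type u) [Field K] (s t : FreeAlgebra K (Fin 2))
    (h : FreeAlgebra.ι K (0 : Fin 2) * s = FreeAlgebra.ι K (1 : Fin 2) * t) : s = 0 := by
  let φ := FreeAlgebra.equivMonoidAlgebraFreeMonoid (R := K) (X := Fin 2)
  have hι : ∀ x : Fin 2, φ (FreeAlgebra.ι K x) = MonoidAlgebra.single (FreeMonoid.of x) 1 := by
    intro x
    simp [φ, FreeAlgebra.equivMonoidAlgebraFreeMonoid, MonoidAlgebra.of_apply]
  have h' : MonoidAlgebra.single (FreeMonoid.of (0:Fin 2)) (1:K) * φ s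
      = MonoidAlgebra.single (FreeMonoid.of (1:Fin 2)) 1 * φ t := by
    have := congrArg φ h
    rw [map_mul, map_mul, hι, hι] at this
    exact this
  have hz : φ s = 0 := by
    ext w
    have h0 := congrArg (fun f : MonoidAlgebra K (FreeMonoid (Fin 2)) =>
      f.coeff (FreeMonoid.of (0:Fin 2) * w)) h'
    rw [MonoidAlgebra.coeff_single_mul_eq_mul_coeff (x := φ s) w
      (fun a _ => ⟨fun hh => mul_left_cancel hh, fun hh => by rw [hh]⟩),
      MonoidAlgebra.single_mul_apply_of_not_exists_mul] at h0
    · simpa using h0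
    · rintro ⟨d, hd⟩
      have := congrArg FreeMonoid.toList hd
      rw [FreeMonoid.toList_of_mul, FreeMonoid.toList_of_mul] at this
      exact absurd (List.head_eq_of_cons_eq this) (by decide)
  exact φ.injective (hz.trans (map_zero φ).symm)

lemma key_decomp {A : Type u} [Ring A] {D : Type u} [AddCommGroup D] [Module A D]
    (hD : IsInjectiveModule A D) {U₀ V₀ : Submodule A D}
    (hU₀ : U₀ ≠ ⊥) (hV₀ : V₀ ≠ ⊥) (hUV : U₀ ⊓ V₀ = ⊥) :
    ∃ U V : Submodule A D, U ≠ ⊥ ∧ V ≠ ⊥ ∧ IsCompl U V := by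
  classical
  set s₁ : Set (Submodule A D) :=
    {W | U₀ ≤ W ∧ ∀ x ∈ W, x ≠ 0 → ∃ c : A, c • x ∈ U₀ ∧ c • x ≠ 0} with hs₁
  have hU₀s₁ : U₀ ∈ s₁ := ⟨le_rfl, fun x hx hx0 => ⟨1, by simpa using hx, by simpa using hx0⟩⟩
  obtain ⟨W, hU₀W, hWmax⟩ := zorn_le_nonempty₀ s₁ (fun c hcs hc y hy => by
    refine ⟨sSup c, ⟨?_, ?_⟩, fun z hz => le_sSup hz⟩
    · exact le_trans (hcs hy).1 (le_sSup hy)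
    · intro x hx hx0
      obtain ⟨W, hWc, hxW⟩ := (Submodule.mem_sSup_of_directed ⟨y, hy⟩ hc.directedOn).1 hx
      exact (hcs hWc).2 x hxW hx0) U₀ hU₀s₁
  have hWess := hWmax.prop
  have hWV₀ : W ⊓ V₀ = ⊥ := by
    rw [eq_bot_iff]
    rintro x hx
    rw [Submodule.mem_inf] at hx
    by_contra hx0
    have hx0' : x ≠ 0 := fun h => hx0 (h ▸ (Submodule.mem_bot A).2 rfl)
    obtain ⟨c, hc1, hc2⟩ := hWess.2 x hx.1 hx0'
    exact hc2 ((eq_bot_iff.1 hUV) (Submodule.mem_inf.2 ⟨hc1, Submodule.smul_mem _ c hx.2⟩))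
  obtain ⟨S, hV₀S, hSmax⟩ := zorn_le_nonempty₀ {S | W ⊓ S = ⊥} (fun c hcs hc y hy => by
    refine ⟨sSup c, show W ⊓ sSup c = ⊥ from ?_, fun z hz => le_sSup hz⟩
    rw [eq_bot_iff]
    rintro x hx
    rw [Submodule.mem_inf] at hx
    obtain ⟨S, hSc, hxS⟩ := (Submodule.mem_sSup_of_directed ⟨y, hy⟩ hc.directedOn).1 hx.2
    exact (eq_bot_iff.1 (hcs hSc)) (Submodule.mem_inf.2 ⟨hx.1, hxS⟩)) V₀ hWV₀
  have hWS : W ⊓ S = ⊥ := hSmax.prop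
  set L : Submodule A D := W ⊔ S with hL
  set W' : Submodule A L := W.comap L.subtype with hW'
  set S' : Submodule A L := S.comap L.subtype with hS'
  have hcompl : IsCompl W' S' := by
    constructor
    · rw [disjoint_iff, eq_bot_iff]
      rintro x hx
      rw [Submodule.mem_inf] at hx
      have : (x : D) ∈ W ⊓ S := Submodule.mem_inf.2 ⟨hx.1, hx.2⟩
      rw [hWS, Submodule.mem_bot] at this
      exact (Submodule.mem_bot A).2 (Subtype.ext this)
    · rw [codisjoint_iff, eq_top_iff]
      rintro ⟨x, hx⟩ -
      obtain ⟨w, hw, s, hs, rfl⟩ := Submodule.mem_sup.1 hx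
      refine Submodule.mem_sup.2 ⟨⟨w, le_sup_left (a := W) (b := S) hw⟩, hw,
        ⟨s, le_sup_right (a := W) (b := S) hs⟩, hs, rfl⟩
  set proj := Submodule.projectionOnto W' S' hcompl with hproj
  set p : L →ₗ[A] D := L.subtype.comp ((W'.subtype).comp proj) with hp
  obtain ⟨h, hh⟩ := hD D L p
  have hWid : ∀ w ∈ W, h w = w := by
    intro w hw
    have hwL : w ∈ L := le_sup_left (a := W) (b := S) hw
    have := hh ⟨w, hwL⟩
    rwa [hp, LinearMap.comp_apply, LinearMap.comp_apply,
      Submodule.projectionOnto_apply_of_mem_left hcompl (x := ⟨w, hwL⟩) hw] at this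
  have hS0 : ∀ s ∈ S, h s = 0 := by
    intro s hs
    have hsL : s ∈ L := le_sup_right (a := W) (b := S) hs
    have := hh ⟨s, hsL⟩
    rwa [hp, LinearMap.comp_apply, LinearMap.comp_apply,
      Submodule.projectionOnto_apply_of_mem_right hcompl (x := ⟨s, hsL⟩) hs, map_zero] at this
  have hWrange : W ≤ LinearMap.range h := fun w hw => ⟨w, hWid w hw⟩
  have hrange : LinearMap.range h = W := by
    refine le_antisymm (hWmax.le_of_ge ⟨le_trans hWess.1 hWrange, ?_⟩ hWrange) hWrange
    rintro x ⟨y, rfl⟩ hx0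
    have hyS : y ∉ S := fun hy => hx0 (hS0 y hy)
    have hTS : ¬ (W ⊓ (S ⊔ Submodule.span A {y}) = ⊥) := by
      intro hT
      have : S ⊔ Submodule.span A {y} ≤ S := hSmax.le_of_ge hT le_sup_left
      exact hyS (this (Submodule.mem_sup_right (Submodule.mem_span_singleton_self y)))
    obtain ⟨w, hw, hw0⟩ := Submodule.exists_mem_ne_zero_of_ne_bot hTS
    rw [Submodule.mem_inf] at hw
    obtain ⟨s, hs, z, hz, rfl⟩ := Submodule.mem_sup.1 hw.2
    obtain ⟨c, rfl⟩ := Submodule.mem_span_singleton.1 hz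
    have hkey : s + c • y = c • h y := by
      have h1 : h (s + c • y) = s + c • y := hWid _ hw.1
      rw [map_add, map_smul, hS0 s hs, zero_add] at h1
      exact h1.symm
    obtain ⟨c', hc'1, hc'2⟩ := hWess.2 _ hw.1 hw0
    refine ⟨c' * c, ?_, ?_⟩
    · rw [mul_smul]
      rwa [hkey] at hc'1
    · rw [mul_smul]
      rwa [hkey] at hc'2
  have hidem : ∀ x, h (h x) = h x := fun x =>
    hWid (h x) (hrange ▸ LinearMap.mem_range_self h x)
  refine ⟨W, LinearMap.ker h, ?_, ?_, ?_, ?_⟩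
  · intro hW0
    exact hU₀ (le_bot_iff.1 (hW0 ▸ hWess.1))
  · intro hk0
    refine hV₀ (le_bot_iff.1 (hk0 ▸ ?_))
    exact le_trans hV₀S (fun s hs => LinearMap.mem_ker.2 (hS0 s hs))
  · rw [disjoint_iff, eq_bot_iff]
    rintro x hx
    rw [Submodule.mem_inf] at hx
    have := hWid x hx.1
    rw [LinearMap.mem_ker.1 hx.2] at this
    exact (Submodule.mem_bot A).2 this.symm
  · rw [codisjoint_iff, eq_top_iff]
    intro x _
    refine Submodule.mem_sup.2 ⟨h x, hrange ▸ LinearMap.mem_range_self h x,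
      x - h x, LinearMap.mem_ker.2 ?_, by abel⟩
    rw [map_sub, hidem, sub_self]

end AuxProof



theorem injective_hull_of_free_algebra_no_indecomposable_summand
    (K : Type u) [Field K]
    (E : Type u) [AddCommGroup E] [Module (FreeAlgebra K (Fin 2))ᵐᵒᵖ E]
    (hEinj : IsInjectiveModule (FreeAlgebra K (Fin 2))ᵐᵒᵖ E)
    (emb : FreeAlgebra K (Fin 2) →ₗ[(FreeAlgebra K (Fin 2))ᵐᵒᵖ] E)
    (hemb : Function.Injective emb)
    (hess : ∀ U : Submodule (FreeAlgebra K (Fin 2))ᵐᵒᵖ E, U ≠ ⊥ →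
      LinearMap.range emb ⊓ U ≠ ⊥) :
    ∀ (ι : Type u) (D : Type u) [AddCommGroup D] [Module (FreeAlgebra K (Fin 2))ᵐᵒᵖ D],
      IsDirectSummand (FreeAlgebra K (Fin 2))ᵐᵒᵖ D (ι → E) → (∃ d : D, d ≠ 0) →
      ∃ U V : Submodule (FreeAlgebra K (Fin 2))ᵐᵒᵖ D, U ≠ ⊥ ∧ V ≠ ⊥ ∧ IsCompl U V := by
  intro ι D _ _ hsum hd
  obtain ⟨i, π, hπ⟩ := hsum
  obtain ⟨d₀, hd₀⟩ := hd
  set A := (FreeAlgebra K (Fin 2))ᵐᵒᵖ with hA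
  have hDinj : IsInjectiveModule A D := by
    intro B _ _ L g
    choose hf hhf using fun k : ι => hEinj B L ((LinearMap.proj k).comp (i.comp g))
    refine ⟨π.comp (LinearMap.pi hf), fun x => ?_⟩
    have hfun : (LinearMap.pi hf) (x : B) = i (g x) := by
      ext k; simpa using hhf k x
    rw [LinearMap.comp_apply, hfun, ← LinearMap.comp_apply, hπ, LinearMap.id_apply]
  have hid₀ : i d₀ ≠ 0 := by
    intro hz
    apply hd₀
    have := LinearMap.ext_iff.1 hπ d₀
    rw [LinearMap.comp_apply, hz, map_zero, LinearMap.id_apply] at this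
    exact this.symm
  obtain ⟨k, hk⟩ : ∃ k, i d₀ k ≠ 0 := by
    by_contra hc
    push_neg at hc
    exact hid₀ (funext hc)
  set g : D →ₗ[A] E := (LinearMap.proj k).comp i with hg
  have he : g d₀ ≠ 0 := hk
  have hspan : Submodule.span A {g d₀} ≠ ⊥ := by
    rw [Ne, Submodule.span_singleton_eq_bot]
    exact he
  obtain ⟨z, hz, hz0⟩ := Submodule.exists_mem_ne_zero_of_ne_bot (hess _ hspan)
  rw [Submodule.mem_inf] at hz
  obtain ⟨r, hr⟩ := hz.1
  obtain ⟨c, hc⟩ := Submodule.mem_span_singleton.1 hz.2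
  have hr0 : r ≠ 0 := by rintro rfl; rw [map_zero] at hr; exact hz0 hr.symm
  set u : D := c • d₀ with hu
  have hgu : g u = emb r := by rw [hu, map_smul, hc, hr]
  set X : FreeAlgebra K (Fin 2) := FreeAlgebra.ι K (0 : Fin 2) with hX
  set Y : FreeAlgebra K (Fin 2) := FreeAlgebra.ι K (1 : Fin 2) with hY
  set a : D := (op X : A) • u with ha
  set b : D := (op Y : A) • u with hb
  have hga : g a = emb (r * X) := by
    rw [ha, map_smul, hgu, ← map_smul, op_smul_eq_mul]
  have hgb : g b = emb (r * Y) := by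
    rw [hb, map_smul, hgu, ← map_smul, op_smul_eq_mul]
  have ha0 : a ≠ 0 := by
    intro h0
    rw [h0, map_zero] at hga
    have : r * X = 0 := hemb (by rw [← hga, map_zero])
    rcases mul_eq_zero.1 this with h | h
    · exact hr0 h
    · exact FreeAlgebra.ι_ne_zero (0 : Fin 2) h
  have hb0 : b ≠ 0 := by
    intro h0
    rw [h0, map_zero] at hgb
    have : r * Y = 0 := hemb (by rw [← hgb, map_zero])
    rcases mul_eq_zero.1 this with h | h
    · exact hr0 h
    · exact FreeAlgebra.ι_ne_zero (1 : Fin 2) h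
  have hU₀ : Submodule.span A {a} ≠ ⊥ := by rw [Ne, Submodule.span_singleton_eq_bot]; exact ha0
  have hV₀ : Submodule.span A {b} ≠ ⊥ := by rw [Ne, Submodule.span_singleton_eq_bot]; exact hb0
  have hUV : Submodule.span A {a} ⊓ Submodule.span A {b} = ⊥ := by
    rw [eq_bot_iff]
    rintro x hx
    rw [Submodule.mem_inf] at hx
    obtain ⟨c₁, hc₁⟩ := Submodule.mem_span_singleton.1 hx.1
    obtain ⟨c₂, hc₂⟩ := Submodule.mem_span_singleton.1 hx.2
    have hsm : ∀ (m : FreeAlgebra K (Fin 2)) (cc : A), cc • m = m * cc.unop :=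
      fun m cc => rfl
    have e1 : g x = emb (r * X * c₁.unop) := by
      rw [← hc₁, map_smul, hga, ← map_smul, hsm]
    have e2 : g x = emb (r * Y * c₂.unop) := by
      rw [← hc₂, map_smul, hgb, ← map_smul, hsm]
    have hgx : emb (r * X * c₁.unop) = emb (r * Y * c₂.unop) := by rw [← e1, ← e2]
    have heq : X * c₁.unop = Y * c₂.unop := by
      have := hemb hgx
      rw [mul_assoc, mul_assoc] at this
      exact mul_left_cancel₀ hr0 this
    have hc₁0 : c₁.unop = 0 := free_indep K _ _ heq
    have : c₁ = 0 := unop_injective (by rw [hc₁0, unop_zero])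
    rw [← hc₁, this, zero_smul]
    exact Submodule.zero_mem ⊥
  exact key_decomp hDinj hU₀ hV₀ hUV


end
end

section
/- Let R be a ring, let P be a class of right R-modules closed under isomorphism, arbitrary direct products and direct summands, and let S be the class of left R-modules M whose character module M* belongs to P. If P is a definable subcategory of right R-modules, then for every right R-module N one has N ∈ P if and only if N* ∈ S. -/
universe u

open MulOpposite DirectSum

noncomputable section

universe v

namespace PPAux

@[simp] lemma char_zero_apply {M : Type u} [AddCommGroup M] (m : M) :
    (0 : Character M) m = 0 := rfl

@[simp] lemma char_add_apply {M : Type u} [AddCommGroup M] (f g : Character M) (m : M) :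
    (f + g) m = f m + g m := rfl

@[simp] lemma char_neg_apply {M : Type u} [AddCommGroup M] (f : Character M) (m : M) :
    (-f) m = -(f m) := rfl

@[simp] lemma char_sub_apply {M : Type u} [AddCommGroup M] (f g : Character M) (m : M) :
    (f - g) m = f m - g m := rfl

lemma char_sum_apply {M : Type u} [AddCommGroup M] {ι : Type*} (s : Finset ι)
    (f : ι → Character M) (m : M) : (∑ i ∈ s, f i) m = ∑ i ∈ s, f i m := by
  classical
  induction s using Finset.induction_on with
  | empty => rfl
  | insert _ _ h ih => rw [Finset.sum_insert h, Finset.sum_insert h, ← ih]; rfl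

lemma exists_char_extend {G : Type v} [AddCommGroup G] (W : AddSubgroup G)
    (g0 : W →+ RatCircle) : ∃ g : G →+ RatCircle, ∀ w : W, g ↑w = g0 w := by
  obtain ⟨g, hg⟩ := CharacterModule.dual_surjective_of_injective (R := ℤ)
    W.subtype.toIntLinearMap (fun _ _ h => Subtype.ext h) g0
  exact ⟨g, fun w => DFunLike.congr_fun hg w⟩

lemma exists_char_ne {X : Type v} [AddCommGroup X] {x : X} (hx : x ≠ 0) :
    ∃ χ : X →+ RatCircle, χ x ≠ 0 := by
  obtain ⟨c, hc⟩ := CharacterModule.exists_character_apply_ne_zero_of_ne_zero hx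
  exact ⟨c, hc⟩

/-- Solution set of a system of linear equations (a pp formula):
`u` is a solution iff there is a witness `x` with `C x = D u`. -/
def Sol (A : Type u) [Ring A] {κ μ ρ : Type*} [Fintype κ] [Fintype μ] [Fintype ρ]
    (C : κ → μ → A) (D : κ → ρ → A)
    (X : Type u) [AddCommGroup X] [Module A X] : Set (ρ → X) :=
  {u | ∃ x : μ → X, ∀ j, ∑ k, C j k • x k = ∑ l, D j l • u l}

lemma zero_mem_Sol (A : Type u) [Ring A] {κ μ ρ : Type*} [Fintype κ] [Fintype μ] [Fintype ρ]
    (C : κ → μ → A) (D : κ → ρ → A)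
    (X : Type u) [AddCommGroup X] [Module A X] : (0 : ρ → X) ∈ Sol A C D X :=
  ⟨0, fun j => by simp⟩

/-- Annihilator of a set of tuples, inside tuples of characters. -/
def AnnSol {X : Type u} [AddCommGroup X] {ρ : Type*} [Fintype ρ] (S : Set (ρ → X)) :
    Set (ρ → Character X) :=
  {χ | ∀ u ∈ S, ∑ l, χ l (u l) = 0}

/-- The matrix pair of the dual pp formula. -/
def dP {A A' : Type u} [Ring A] [Ring A'] (e : A → A') {κ μ ρ : Type*}
    (C : κ → μ → A) (D : κ → ρ → A) : (ρ ⊕ μ) → κ → A' :=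
  fun row j => Sum.elim (fun l => e (D j l)) (fun k => e (C j k)) row

def dQ (A' : Type u) [Ring A'] {μ ρ : Type*} [DecidableEq ρ] : (ρ ⊕ μ) → ρ → A' :=
  fun row l' => Sum.elim (fun l => if l' = l then (1 : A') else 0) (fun _ => 0) row

theorem annGen {A A' : Type u} [Ring A] [Ring A']
    {X : Type u} [AddCommGroup X] [Module A X] [Module A' (Character X)]
    (e : A → A') (hsm : ∀ (a : A) (χ : Character X) (v : X), (e a • χ) v = χ (a • v))
    {κ μ ρ : Type*} [Fintype κ] [Fintype μ] [Fintype ρ]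
    [DecidableEq κ] [DecidableEq μ] [DecidableEq ρ]
    (C : κ → μ → A) (D : κ → ρ → A) :
    Sol A' (dP e C D) (dQ A') (Character X) = AnnSol (Sol A C D X) := by
  ext χ
  constructor
  · rintro ⟨z, hz⟩ u ⟨x, hx⟩
    have hrow1 : ∀ l : ρ, ∑ j, e (D j l) • z j = χ l := by
      intro l
      have h := hz (Sum.inl l)
      simp only [dP, dQ, Sum.elim_inl, ite_smul, one_smul, zero_smul,
        Finset.sum_ite_eq', Finset.mem_univ, if_pos] at h
      exact h
    have hrow2 : ∀ k : μ, ∑ j, e (C j k) • z j = 0 := by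
      intro k
      have h := hz (Sum.inr k)
      simpa only [dP, dQ, Sum.elim_inr, zero_smul, Finset.sum_const_zero] using h
    calc ∑ l, χ l (u l) = ∑ l, (∑ j, e (D j l) • z j) (u l) := by
          exact Finset.sum_congr rfl fun l _ => by rw [hrow1]
      _ = ∑ l, ∑ j, z j (D j l • u l) := by
          refine Finset.sum_congr rfl fun l _ => ?_
          rw [char_sum_apply]
          exact Finset.sum_congr rfl fun j _ => hsm _ _ _
      _ = ∑ j, z j (∑ l, D j l • u l) := by
          rw [Finset.sum_comm]
          exact Finset.sum_congr rfl fun j _ => (map_sum (z j) _ _).symm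
      _ = ∑ j, z j (∑ k, C j k • x k) := by
          exact Finset.sum_congr rfl fun j _ => by rw [hx j]
      _ = ∑ k, (∑ j, e (C j k) • z j) (x k) := by
          rw [show (∑ j, z j (∑ k, C j k • x k)) = ∑ j, ∑ k, z j (C j k • x k) from
            Finset.sum_congr rfl fun j _ => map_sum (z j) _ _, Finset.sum_comm]
          refine Finset.sum_congr rfl fun k _ => ?_
          rw [char_sum_apply]
          exact Finset.sum_congr rfl fun j _ => (hsm _ _ _).symm
      _ = 0 := by
          refine Finset.sum_eq_zero fun k _ => ?_
          rw [hrow2 k, char_zero_apply]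
  · intro hχ
    classical
    set α : ((ρ → X) × (μ → X)) →+ (κ → X) :=
      AddMonoidHom.mk' (fun p => fun j => ∑ l, D j l • p.1 l - ∑ k, C j k • p.2 k)
        (by
          intro p q; funext j
          simp only [Prod.fst_add, Prod.snd_add, Pi.add_apply, smul_add,
            Finset.sum_add_distrib]
          abel) with hα
    have hαap : ∀ (p : (ρ → X) × (μ → X)) (j : κ),
        α p j = ∑ l, D j l • p.1 l - ∑ k, C j k • p.2 k := fun p j => rfl
    have hker : ∀ p, α p = 0 → ∑ l, χ l (p.1 l) = 0 := by
      intro p hp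
      refine hχ _ ⟨p.2, fun j => ?_⟩
      have h := congrFun hp j
      rw [hαap] at h
      exact (sub_eq_zero.mp h).symm
    have hkey : ∀ p q, α p = α q → ∑ l, χ l (p.1 l) = ∑ l, χ l (q.1 l) := by
      intro p q h
      have h0 : α (p - q) = 0 := by rw [map_sub, h, sub_self]
      have h1 := hker _ h0
      have h2 : ∑ l, χ l ((p - q).1 l) = ∑ l, (χ l (p.1 l) - χ l (q.1 l)) := by
        refine Finset.sum_congr rfl fun l _ => ?_
        rw [Prod.fst_sub, Pi.sub_apply, map_sub]
      rw [h2, Finset.sum_sub_distrib] at h1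
      exact sub_eq_zero.mp h1
    choose pre hpre using fun w : α.range => AddMonoidHom.mem_range.mp w.2
    set g0 : α.range →+ RatCircle :=
      AddMonoidHom.mk' (fun w => ∑ l, χ l ((pre w).1 l)) (by
        intro w w'
        show (∑ l, χ l ((pre (w + w')).1 l))
          = (∑ l, χ l ((pre w).1 l)) + ∑ l, χ l ((pre w').1 l)
        have h : α (pre (w + w')) = α (pre w + pre w') := by
          rw [hpre, map_add, hpre, hpre]; rfl
        rw [hkey _ _ h]
        rw [Finset.sum_congr rfl fun l (_ : l ∈ Finset.univ) =>
          show χ l ((pre w + pre w').1 l) = χ l ((pre w).1 l) + χ l ((pre w').1 l) from by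
            rw [Prod.fst_add, Pi.add_apply, map_add]]
        rw [Finset.sum_add_distrib]) with hg0
    obtain ⟨g, hg⟩ := exists_char_extend α.range g0
    have hgval : ∀ p : (ρ → X) × (μ → X), g (α p) = ∑ l, χ l (p.1 l) := by
      intro p
      have h1 : g (α p) = g0 ⟨α p, ⟨p, rfl⟩⟩ := hg ⟨α p, ⟨p, rfl⟩⟩
      rw [h1]
      exact hkey _ _ (hpre ⟨α p, ⟨p, rfl⟩⟩)
    set zc : κ → Character X := fun j => g.comp (AddMonoidHom.single (fun _ => X) j) with hzc
    have hzcap : ∀ (j : κ) (w : X), zc j w = g (Pi.single j w) := fun j w => rfl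
    refine ⟨zc, ?_⟩
    rintro (l | k)
    · refine Character.ext fun v => ?_
      rw [char_sum_apply, char_sum_apply]
      trans (χ l v)
      · have hL : ∀ j : κ, (dP e C D (Sum.inl l) j • zc j) v
            = g (Pi.single j (D j l • v)) := fun j => by
          rw [show dP e C D (Sum.inl l) j = e (D j l) from rfl, hsm, hzcap]
        rw [Finset.sum_congr rfl fun j _ => hL j, ← map_sum]
        have hsingle : (∑ j, Pi.single j (D j l • v)) = α (Pi.single l v, 0) := by
          rw [Finset.univ_sum_single (fun j => D j l • v)]
          funext j
          rw [hαap]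
          simp only [Pi.zero_apply, smul_zero, Finset.sum_const_zero, sub_zero]
          rw [Finset.sum_congr rfl fun l' (_ : l' ∈ Finset.univ) =>
            show D j l' • (Pi.single l v : ρ → X) l' = if l' = l then D j l' • v else 0 from by
              rcases eq_or_ne l' l with h | h
              · subst h; rw [if_pos rfl, Pi.single_eq_same]
              · rw [if_neg h, Pi.single_eq_of_ne h, smul_zero]]
          rw [Finset.sum_ite_eq' Finset.univ l (fun l' => D j l' • v),
            if_pos (Finset.mem_univ l)]
        rw [hsingle, hgval]
        rw [Finset.sum_congr rfl fun l' (_ : l' ∈ Finset.univ) =>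
          show χ l' (((Pi.single l v : ρ → X), (0 : μ → X)).1 l') = if l' = l then χ l' v else 0 from by
            rcases eq_or_ne l' l with h | h
            · subst h
              rw [if_pos rfl]
              show χ l' ((Pi.single l' v : ρ → X) l') = χ l' v
              rw [Pi.single_eq_same]
            · rw [if_neg h]
              show χ l' ((Pi.single l v : ρ → X) l') = 0
              rw [Pi.single_eq_of_ne h, map_zero]]
        rw [Finset.sum_ite_eq' Finset.univ l (fun l' => χ l' v), if_pos (Finset.mem_univ l)]
      · rw [Finset.sum_congr rfl fun l' (_ : l' ∈ Finset.univ) =>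
          show (dQ A' (Sum.inl l) l' • χ l') v = if l' = l then χ l' v else 0 from by
            rw [show dQ A' (Sum.inl l) l' = if l' = l then (1 : A') else 0 from rfl, ite_smul,
              one_smul, zero_smul]
            rcases eq_or_ne l' l with h | h
            · rw [if_pos h, if_pos h]
            · rw [if_neg h, if_neg h, char_zero_apply]]
        rw [Finset.sum_ite_eq' Finset.univ l (fun l' => χ l' v), if_pos (Finset.mem_univ l)]
    · refine Character.ext fun v => ?_
      rw [char_sum_apply, char_sum_apply]
      trans (0 : RatCircle)
      · have hL : ∀ j : κ, (dP e C D (Sum.inr k) j • zc j) v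
            = g (Pi.single j (C j k • v)) := fun j => by
          rw [show dP e C D (Sum.inr k) j = e (C j k) from rfl, hsm, hzcap]
        rw [Finset.sum_congr rfl fun j _ => hL j, ← map_sum]
        have hsingle : (∑ j, Pi.single j (C j k • v)) = α (0, -Pi.single k v) := by
          rw [Finset.univ_sum_single (fun j => C j k • v)]
          funext j
          rw [hαap]
          simp only [Pi.zero_apply, smul_zero, Finset.sum_const_zero, zero_sub]
          rw [Finset.sum_congr rfl fun k' (_ : k' ∈ Finset.univ) =>
            show C j k' • (-(Pi.single k v : μ → X)) k' = -(if k' = k then C j k' • v else 0) from by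
              rw [Pi.neg_apply, smul_neg]
              rcases eq_or_ne k' k with h | h
              · subst h; rw [if_pos rfl, Pi.single_eq_same]
              · rw [if_neg h, Pi.single_eq_of_ne h, smul_zero, neg_zero]]
          rw [← Finset.sum_neg_distrib]
          simp only [neg_neg]
          rw [Finset.sum_ite_eq' Finset.univ k (fun k' => C j k' • v), if_pos (Finset.mem_univ k)]
        rw [hsingle, hgval]
        refine Finset.sum_eq_zero fun l' _ => ?_
        show χ l' ((0 : ρ → X) l') = 0
        rw [Pi.zero_apply, map_zero]
      · refine (Finset.sum_eq_zero fun l' _ => ?_).symm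
        rw [show dQ A' (Sum.inr k) l' = (0 : A') from rfl, zero_smul, char_zero_apply]

theorem ddGen {A A' : Type u} [Ring A] [Ring A'] (e : A → A') (e' : A' → A)
    (hee : ∀ a, e' (e a) = a) (h1 : e' 1 = 1) (h0 : e' 0 = 0)
    {κ μ ρ : Type*} [Fintype κ] [Fintype μ] [Fintype ρ]
    [DecidableEq κ] [DecidableEq μ] [DecidableEq ρ]
    (C : κ → μ → A) (D : κ → ρ → A)
    (Z : Type u) [AddCommGroup Z] [Module A Z] :
    Sol A (dP e' (dP e C D) (dQ A')) (dQ A) Z = Sol A C D Z := by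
  have hP1 : ∀ (l : ρ) (w : ρ ⊕ μ), dP e' (dP e C D) (dQ A') (Sum.inl l) w = e' (dQ A' w l) :=
    fun l w => rfl
  have hP2 : ∀ (j : κ) (w : ρ ⊕ μ), dP e' (dP e C D) (dQ A') (Sum.inr j) w = e' (dP e C D w j) :=
    fun j w => rfl
  have hrow1 : ∀ (W : (ρ ⊕ μ) → Z) (l : ρ),
      (∑ w, dP e' (dP e C D) (dQ A') (Sum.inl l) w • W w) = W (Sum.inl l) := by
    intro W l
    rw [Fintype.sum_sum_type]
    have e1 : ∀ l'' : ρ, dP e' (dP e C D) (dQ A') (Sum.inl l) (Sum.inl l'') • W (Sum.inl l'')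
        = if l = l'' then W (Sum.inl l'') else 0 := fun l'' => by
      rw [hP1, show dQ A' (Sum.inl l'') l = if l = l'' then (1 : A') else 0 from rfl]
      rcases eq_or_ne l l'' with h | h
      · rw [if_pos h, if_pos h, h1, one_smul]
      · rw [if_neg h, if_neg h, h0, zero_smul]
    have e2 : ∀ k : μ, dP e' (dP e C D) (dQ A') (Sum.inl l) (Sum.inr k) • W (Sum.inr k) = 0 :=
      fun k => by rw [hP1, show dQ A' (Sum.inr k) l = (0 : A') from rfl, h0, zero_smul]
    rw [Finset.sum_congr rfl fun l'' _ => e1 l'', Finset.sum_congr rfl fun k _ => e2 k,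
      Finset.sum_const_zero, add_zero,
      Finset.sum_ite_eq Finset.univ l (fun l'' => W (Sum.inl l'')), if_pos (Finset.mem_univ l)]
  have hrow2 : ∀ (W : (ρ ⊕ μ) → Z) (j : κ),
      (∑ w, dP e' (dP e C D) (dQ A') (Sum.inr j) w • W w)
        = (∑ l, D j l • W (Sum.inl l)) + ∑ k, C j k • W (Sum.inr k) := by
    intro W j
    rw [Fintype.sum_sum_type]
    congr 1
    · exact Finset.sum_congr rfl fun l _ => by rw [hP2, show dP e C D (Sum.inl l) j
        = e (D j l) from rfl, hee]
    · exact Finset.sum_congr rfl fun k _ => by rw [hP2, show dP e C D (Sum.inr k) j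
        = e (C j k) from rfl, hee]
  have hq : ∀ (u : ρ → Z) (l : ρ), (∑ l', dQ A (μ := κ) (Sum.inl l) l' • u l') = u l := by
    intro u l
    have : ∀ l', dQ A (μ := κ) (Sum.inl l) l' • u l' = if l' = l then u l' else 0 := fun l' => by
      rw [show dQ A (μ := κ) (Sum.inl l) l' = if l' = l then (1 : A) else 0 from rfl, ite_smul,
        one_smul, zero_smul]
    rw [Finset.sum_congr rfl fun l' _ => this l',
      Finset.sum_ite_eq' Finset.univ l u, if_pos (Finset.mem_univ l)]
  have hq2 : ∀ (u : ρ → Z) (j : κ), (∑ l', dQ A (μ := κ) (Sum.inr j) l' • u l') = 0 := by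
    intro u j
    exact Finset.sum_eq_zero fun l' _ => by
      rw [show dQ A (μ := κ) (Sum.inr j) l' = (0 : A) from rfl, zero_smul]
  ext u
  constructor
  · rintro ⟨W, hW⟩
    have hinl : ∀ l, W (Sum.inl l) = u l := fun l => by
      have h := hW (Sum.inl l)
      rwa [hrow1, hq] at h
    refine ⟨fun k => -W (Sum.inr k), fun j => ?_⟩
    have h := hW (Sum.inr j)
    rw [hrow2, hq2] at h
    have h2 : (∑ k, C j k • -W (Sum.inr k)) = -∑ k, C j k • W (Sum.inr k) := by
      rw [← Finset.sum_neg_distrib]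
      exact Finset.sum_congr rfl fun k _ => smul_neg _ _
    rw [h2, Finset.sum_congr rfl fun l (_ : l ∈ Finset.univ) => (congrArg (D j l • ·)
      (hinl l)).symm]
    exact neg_eq_of_add_eq_zero_left h
  · rintro ⟨x, hx⟩
    refine ⟨Sum.elim u (fun k => -x k), fun row => ?_⟩
    rcases row with l | j
    · rw [hrow1, hq]; rfl
    · rw [hrow2, hq2]
      have h2 : (∑ k, C j k • Sum.elim u (fun k' => -x k') (Sum.inr k))
          = -∑ k, C j k • x k := by
        rw [← Finset.sum_neg_distrib]
        exact Finset.sum_congr rfl fun k _ => by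
          rw [show Sum.elim u (fun k' => -x k') (Sum.inr k) = -x k from rfl, smul_neg]
      rw [h2, hx j, Finset.sum_congr rfl fun l (_ : l ∈ Finset.univ) =>
        show D j l • Sum.elim u (fun k' => -x k') (Sum.inl l) = D j l • u l from rfl]
      abel

theorem sol_transfer {R : Type u} [Ring R] {κ μ κ' μ' ρ : Type*}
    [Fintype κ] [Fintype μ] [Fintype κ'] [Fintype μ'] [Fintype ρ]
    [DecidableEq κ] [DecidableEq μ] [DecidableEq κ'] [DecidableEq μ'] [DecidableEq ρ]
    (C : κ → μ → Rᵐᵒᵖ) (D : κ → ρ → Rᵐᵒᵖ) (C' : κ' → μ' → Rᵐᵒᵖ) (D' : κ' → ρ → Rᵐᵒᵖ)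
    (M : Type u) [AddCommGroup M] [Module Rᵐᵒᵖ M]
    (h : Sol Rᵐᵒᵖ C D M ⊆ Sol Rᵐᵒᵖ C' D' M) :
    Sol Rᵐᵒᵖ C D (Character (Character M)) ⊆ Sol Rᵐᵒᵖ C' D' (Character (Character M)) := by
  have e1 : ∀ (a : Rᵐᵒᵖ) (χ : Character M) (v : M), (MulOpposite.unop a • χ) v = χ (a • v) :=
    fun a χ v => by rw [Character.smul_left_apply, MulOpposite.op_unop]
  have e2 : ∀ (a : R) (g : Character (Character M)) (w : Character M),
      (MulOpposite.op a • g) w = g (a • w) :=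
    fun a g w => by rw [Character.smul_right_apply, MulOpposite.unop_op]
  have h1 : AnnSol (Sol Rᵐᵒᵖ C' D' M) ⊆ AnnSol (Sol Rᵐᵒᵖ C D M) :=
    fun χ hχ u hu => hχ u (h hu)
  rw [← annGen (A := Rᵐᵒᵖ) (A' := R) MulOpposite.unop e1 C D,
    ← annGen (A := Rᵐᵒᵖ) (A' := R) MulOpposite.unop e1 C' D'] at h1
  have h2 : AnnSol (Sol R (dP MulOpposite.unop C D) (dQ R) (Character M))
      ⊆ AnnSol (Sol R (dP MulOpposite.unop C' D') (dQ R) (Character M)) :=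
    fun g hg χ hχ => hg χ (h1 hχ)
  rw [← annGen (A := R) (A' := Rᵐᵒᵖ) MulOpposite.op e2 (dP MulOpposite.unop C D) (dQ R),
    ← annGen (A := R) (A' := Rᵐᵒᵖ) MulOpposite.op e2 (dP MulOpposite.unop C' D') (dQ R),
    ddGen MulOpposite.unop MulOpposite.op (fun a => MulOpposite.op_unop a)
      MulOpposite.op_one MulOpposite.op_zero C D (Character (Character M)),
    ddGen MulOpposite.unop MulOpposite.op (fun a => MulOpposite.op_unop a)
      MulOpposite.op_one MulOpposite.op_zero C' D' (Character (Character M))] at h2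
  exact h2

end PPAux

namespace PPAux

variable {R : Type u} [Ring R]

/-- The canonical evaluation map of a module into its double character module. -/
def ev0 (X : Type u) [AddCommGroup X] (v : X) : Character (Character X) :=
  { toFun := fun χ => χ v
    map_zero' := rfl
    map_add' := fun _ _ => rfl }

lemma ev0_apply (X : Type u) [AddCommGroup X] (v : X) (χ : Character X) :
    ev0 X v χ = χ v := rfl

def evHom (X : Type u) [AddCommGroup X] [Module Rᵐᵒᵖ X] :
    X →ₗ[Rᵐᵒᵖ] Character (Character X) where
  toFun := ev0 X
  map_add' v w := Character.ext fun χ => map_add χ v w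
  map_smul' s v := Character.ext fun χ => by
    rw [ev0_apply, RingHom.id_apply, Character.smul_right_apply, ev0_apply,
      Character.smul_left_apply, MulOpposite.op_unop]

lemma evHom_apply (X : Type u) [AddCommGroup X] [Module Rᵐᵒᵖ X] (v : X) (χ : Character X) :
    evHom (R := R) X v χ = χ v := rfl

lemma evHom_pure (X : Type u) [AddCommGroup X] [Module Rᵐᵒᵖ X] :
    IsPureEmbedding Rᵐᵒᵖ (evHom (R := R) X) := by
  classical
  constructor
  · intro a b hab
    by_contra hne
    obtain ⟨χ, hχ⟩ := exists_char_ne (sub_ne_zero.mpr hne)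
    have : χ a = χ b := by
      have := congrArg (fun F : Character (Character X) => F χ) hab
      exact this
    rw [map_sub, this, sub_self] at hχ
    exact hχ rfl
  · intro m n r l hx
    obtain ⟨x, hx⟩ := hx
    by_contra hno
    -- the range of the coefficient map
    set β : (Fin n → X) →+ (Fin m → X) :=
      AddMonoidHom.mk' (fun y => fun j => ∑ k, r j k • y k) (by
        intro y y'; funext j
        simp only [Pi.add_apply, smul_add, Finset.sum_add_distrib]) with hβ
    have hmem : l ∉ AddMonoidHom.range β := by
      rintro ⟨y, hy⟩
      exact hno ⟨y, fun j => congrFun hy j⟩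
    have hne0 : (QuotientAddGroup.mk l : (Fin m → X) ⧸ AddMonoidHom.range β) ≠ 0 := by
      rw [Ne, QuotientAddGroup.eq_zero_iff]
      exact hmem
    obtain ⟨χ0, hχ0⟩ := exists_char_ne hne0
    set χ : (Fin m → X) →+ RatCircle := χ0.comp (QuotientAddGroup.mk' (AddMonoidHom.range β))
      with hχdef
    have hχV : ∀ w ∈ AddMonoidHom.range β, χ w = 0 := by
      intro w hw
      show χ0 (QuotientAddGroup.mk w) = 0
      rw [(QuotientAddGroup.eq_zero_iff w).mpr hw, map_zero]
    set χj : Fin m → Character X := fun j => χ.comp (AddMonoidHom.single (fun _ => X) j)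
      with hχj
    have hχjap : ∀ (j : Fin m) (w : X), χj j w = χ (Pi.single j w) := fun j w => rfl
    have hψ : ∀ k : Fin n, (∑ j, MulOpposite.unop (r j k) • χj j) = 0 := by
      intro k
      refine Character.ext fun v => ?_
      rw [char_sum_apply]
      have h1 : ∀ j : Fin m, (MulOpposite.unop (r j k) • χj j) v = χ (Pi.single j (r j k • v)) :=
        fun j => by rw [Character.smul_left_apply, MulOpposite.op_unop, hχjap]
      rw [Finset.sum_congr rfl fun j _ => h1 j, ← map_sum,
        Finset.univ_sum_single (fun j => r j k • v)]
      have h2 : (fun j => r j k • v) ∈ AddMonoidHom.range β := by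
        refine ⟨Pi.single k v, ?_⟩
        funext j
        show (∑ k', r j k' • (Pi.single k v : Fin n → X) k') = r j k • v
        rw [Finset.sum_congr rfl fun k' (_ : k' ∈ Finset.univ) =>
          show r j k' • (Pi.single k v : Fin n → X) k' = if k' = k then r j k' • v else 0 from by
            rcases eq_or_ne k' k with h | h
            · subst h; rw [if_pos rfl, Pi.single_eq_same]
            · rw [if_neg h, Pi.single_eq_of_ne h, smul_zero]]
        rw [Finset.sum_ite_eq' Finset.univ k (fun k' => r j k' • v), if_pos (Finset.mem_univ k)]
      rw [hχV _ h2]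
      rfl
    have hlnz : χ l ≠ 0 := hχ0
    apply hlnz
    have hl : χ l = ∑ j, χj j (l j) := by
      conv_lhs => rw [show l = ∑ j, Pi.single j (l j) from (Finset.univ_sum_single l).symm]
      rw [map_sum]
      exact Finset.sum_congr rfl fun j _ => rfl
    rw [hl]
    have h3 : ∀ j : Fin m, χj j (l j) = (∑ k, r j k • x k) (χj j) := by
      intro j
      rw [hx j]
      rfl
    rw [Finset.sum_congr rfl fun j _ => h3 j]
    have h4 : ∀ j, (∑ k, r j k • x k) (χj j) = ∑ k, (x k) (MulOpposite.unop (r j k) • χj j) := by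
      intro j
      rw [char_sum_apply]
      exact Finset.sum_congr rfl fun k _ => by rw [Character.smul_right_apply]
    rw [Finset.sum_congr rfl fun j _ => h4 j, Finset.sum_comm]
    refine Finset.sum_eq_zero fun k _ => ?_
    rw [← map_sum, hψ k, map_zero]

end PPAux

namespace PPAux

variable {R : Type u} [Ring R]

/-- A single pp constraint with parameters drawn from `N`. -/
structure Cstr (R : Type u) [Ring R] (N : Type u) : Type u where
  m : ℕ
  n : ℕ
  q : ℕ
  C : Fin m → Fin n → Rᵐᵒᵖ
  D : Fin m → Fin q → Rᵐᵒᵖ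
  b : Fin q → N

/-- The constraint holds in `X` under the assignment `g`. -/
def Cstr.Holds {N : Type u} (c : Cstr R N) (X : Type u) [AddCommGroup X] [Module Rᵐᵒᵖ X]
    (g : N → X) : Prop :=
  ∃ x : Fin c.n → X, ∀ j, ∑ k, c.C j k • x k = ∑ l, c.D j l • g (c.b l)

open Classical in
/-- The parameter matrix of a constraint re-indexed over a finite set `B` of parameters. -/
def Cstr.DB {N : Type u} (c : Cstr R N) (B : Finset N) : Fin c.m → ↥B → Rᵐᵒᵖ :=
  fun j β => ∑ l, if c.b l = ↑β then c.D j l else 0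

open Classical in
lemma Cstr.DB_apply {N : Type u} (c : Cstr R N) (B : Finset N) (j : Fin c.m) (β : ↥B) :
    c.DB B j β = ∑ l, if c.b l = ↑β then c.D j l else 0 := rfl

lemma Cstr.solB {N : Type u} (c : Cstr R N) (B : Finset N) (hB : ∀ l, c.b l ∈ B)
    (X : Type u) [AddCommGroup X] [Module Rᵐᵒᵖ X] (g : N → X) :
    ((fun β : ↥B => g ↑β) ∈ Sol Rᵐᵒᵖ c.C (c.DB B) X) ↔ c.Holds X g := by
  classical
  have key : ∀ j : Fin c.m, (∑ β : ↥B, c.DB B j β • g ↑β) = ∑ l, c.D j l • g (c.b l) := by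
    intro j
    calc ∑ β : ↥B, c.DB B j β • g ↑β
        = ∑ β : ↥B, ∑ l, (if c.b l = ↑β then c.D j l else 0) • g ↑β := by
          refine Finset.sum_congr rfl fun β _ => ?_
          rw [Cstr.DB_apply, Finset.sum_smul]
      _ = ∑ l, ∑ β : ↥B, (if c.b l = ↑β then c.D j l else 0) • g ↑β := Finset.sum_comm
      _ = ∑ l, c.D j l • g (c.b l) := by
          refine Finset.sum_congr rfl fun l _ => ?_
          rw [Finset.sum_congr rfl fun (β : ↥B) (_ : β ∈ Finset.univ) =>
            show (if c.b l = ↑β then c.D j l else 0) • g ↑β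
                = if β = ⟨c.b l, hB l⟩ then c.D j l • g ↑β else 0 from by
              rcases eq_or_ne β ⟨c.b l, hB l⟩ with h | h
              · rw [if_pos h, if_pos (by rw [h])]
              · rw [if_neg h, if_neg (fun hh => h (Subtype.ext hh.symm)), zero_smul]]
          rw [Finset.sum_ite_eq' Finset.univ (⟨c.b l, hB l⟩ : ↥B) (fun β => c.D j l • g ↑β),
            if_pos (Finset.mem_univ _)]
  constructor
  · rintro ⟨x, hx⟩
    exact ⟨x, fun j => by rw [hx j, key j]⟩
  · rintro ⟨x, hx⟩
    exact ⟨x, fun j => by rw [hx j, key j]⟩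

lemma sol_block {A : Type u} [Ring A] {κ₁ μ₁ κ₂ μ₂ ρ : Type*}
    [Fintype κ₁] [Fintype μ₁] [Fintype κ₂] [Fintype μ₂] [Fintype ρ]
    (C₁ : κ₁ → μ₁ → A) (D₁ : κ₁ → ρ → A) (C₂ : κ₂ → μ₂ → A) (D₂ : κ₂ → ρ → A)
    (X : Type u) [AddCommGroup X] [Module A X] (u : ρ → X) :
    u ∈ Sol A (fun j k => Sum.elim
        (fun j1 => Sum.elim (C₁ j1) (fun _ => (0 : A)))
        (fun j2 => Sum.elim (fun _ => (0 : A)) (C₂ j2)) j k)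
      (Sum.elim D₁ D₂) X
      ↔ u ∈ Sol A C₁ D₁ X ∧ u ∈ Sol A C₂ D₂ X := by
  constructor
  · rintro ⟨x, hx⟩
    constructor
    · refine ⟨fun k => x (Sum.inl k), fun j => ?_⟩
      have h := hx (Sum.inl j)
      rw [Fintype.sum_sum_type] at h
      simpa using h
    · refine ⟨fun k => x (Sum.inr k), fun j => ?_⟩
      have h := hx (Sum.inr j)
      rw [Fintype.sum_sum_type] at h
      simpa using h
  · rintro ⟨⟨x₁, h₁⟩, ⟨x₂, h₂⟩⟩
    refine ⟨Sum.elim x₁ x₂, fun j => ?_⟩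
    rcases j with j | j
    · rw [Fintype.sum_sum_type]
      simpa using h₁ j
    · rw [Fintype.sum_sum_type]
      simpa using h₂ j

lemma exists_combined (N : Type u) (B : Finset N) (S : Finset (Cstr R N))
    (hB : ∀ c ∈ S, ∀ l, c.b l ∈ B) :
    ∃ (κ μ : Type) (_ : Fintype κ) (_ : Fintype μ) (_ : DecidableEq κ) (_ : DecidableEq μ)
      (C : κ → μ → Rᵐᵒᵖ) (D : κ → ↥B → Rᵐᵒᵖ),
      ∀ (X : Type u) (ag : AddCommGroup X) (mo : @Module Rᵐᵒᵖ X _ ag.toAddCommMonoid)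
        (g : N → X),
        ((fun β : ↥B => g ↑β) ∈ Sol Rᵐᵒᵖ C D X) ↔ ∀ c ∈ S, c.Holds X g := by
  classical
  induction S using Finset.induction_on with
  | empty =>
    refine ⟨PEmpty, PEmpty, inferInstance, inferInstance, inferInstance, inferInstance,
      fun j => j.elim, fun j => j.elim, ?_⟩
    intro X ag mo g
    constructor
    · intro _ c hc
      exact absurd hc (Finset.notMem_empty c)
    · intro _
      exact ⟨fun k => k.elim, fun j => j.elim⟩
  | @insert c S hcS ih =>
    obtain ⟨κ, μ, fκ, fμ, dκ, dμ, C, D, hCD⟩ :=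
      ih (fun c' hc' => hB c' (Finset.mem_insert_of_mem hc'))
    have h0 : ∀ l, c.b l ∈ B := hB c (Finset.mem_insert_self c S)
    refine ⟨Fin c.m ⊕ κ, Fin c.n ⊕ μ, inferInstance, inferInstance, inferInstance, inferInstance,
      (fun j k => Sum.elim
        (fun j1 => Sum.elim (c.C j1) (fun _ => (0 : Rᵐᵒᵖ)))
        (fun j2 => Sum.elim (fun _ => (0 : Rᵐᵒᵖ)) (C j2)) j k),
      Sum.elim (c.DB B) D, ?_⟩
    intro X ag mo g
    rw [sol_block c.C (c.DB B) C D X]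
    constructor
    · rintro ⟨h1, h2⟩ c' hc'
      rcases Finset.mem_insert.mp hc' with rfl | hc'
      · exact (c'.solB B h0 X g).mp h1
      · exact (hCD X ag mo g).mp h2 c' hc'
    · intro hall
      exact ⟨(c.solB B h0 X g).mpr (hall c (Finset.mem_insert_self c S)),
        (hCD X ag mo g).mpr fun c' hc' => hall c' (Finset.mem_insert_of_mem hc')⟩

lemma key_lemma {M : Type u} [AddCommGroup M] [Module Rᵐᵒᵖ M]
    (S : Finset (Cstr R (Character (Character M))))
    (hS : ∀ c ∈ S, c.Holds (Character (Character M)) id)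
    (ν : Cstr R (Character (Character M)))
    (hν : ¬ ν.Holds (Character (Character M)) id) :
    ∃ w : Character (Character M) → M, (∀ c ∈ S, c.Holds M w) ∧ ¬ ν.Holds M w := by
  classical
  set B : Finset (Character (Character M)) :=
    (S.biUnion fun c => Finset.image c.b Finset.univ) ∪ Finset.image ν.b Finset.univ with hBdef
  have hB : ∀ c ∈ S, ∀ l, c.b l ∈ B := fun c hc l =>
    Finset.mem_union_left _ (Finset.mem_biUnion.mpr
      ⟨c, hc, Finset.mem_image_of_mem _ (Finset.mem_univ l)⟩)
  have hBν : ∀ l, ν.b l ∈ B := fun l =>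
    Finset.mem_union_right _ (Finset.mem_image_of_mem _ (Finset.mem_univ l))
  obtain ⟨κ, μ, fκ, fμ, dκ, dμ, C, D, hCD⟩ := exists_combined (Character (Character M)) B S hB
  have hidmem : (fun β : ↥B => (↑β : Character (Character M))) ∈
      Sol Rᵐᵒᵖ C D (Character (Character M)) :=
    (hCD (Character (Character M)) _ _ id).mpr hS
  have hidnot : (fun β : ↥B => (↑β : Character (Character M))) ∉
      Sol Rᵐᵒᵖ ν.C (ν.DB B) (Character (Character M)) :=
    fun hmem => hν ((ν.solB B hBν (Character (Character M)) id).mp hmem)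
  have hnotsub : ¬ (Sol Rᵐᵒᵖ C D M ⊆ Sol Rᵐᵒᵖ ν.C (ν.DB B) M) := fun hsub =>
    hidnot (sol_transfer C D ν.C (ν.DB B) M hsub hidmem)
  obtain ⟨w0, hw0, hw0n⟩ := Set.not_subset.mp hnotsub
  set w : Character (Character M) → M := fun v => if h : v ∈ B then w0 ⟨v, h⟩ else 0 with hwdef
  have hw0eq : (fun β : ↥B => w ↑β) = w0 := by
    funext β
    show (if h : (↑β : Character (Character M)) ∈ B then w0 ⟨↑β, h⟩ else 0) = w0 β
    rw [dif_pos β.2, Subtype.coe_eta]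
  refine ⟨w, ?_, ?_⟩
  · intro c hcS
    exact (hCD M _ _ w).mp (by rw [hw0eq]; exact hw0) c hcS
  · intro hH
    exact hw0n (hw0eq ▸ (ν.solB B hBν M w).mpr hH)

end PPAux

namespace PPAux

variable {R : Type u} [Ring R]

/-- A purely "relational" constraint: no existential witnesses. -/
def cRel {N : Type u} (q : ℕ) (Dv : Fin q → Rᵐᵒᵖ) (bv : Fin q → N) : Cstr R N :=
  ⟨1, 0, q, fun _ k => k.elim0, fun _ => Dv, bv⟩

lemma cRel_holds_iff {N : Type u} (q : ℕ) (Dv : Fin q → Rᵐᵒᵖ) (bv : Fin q → N)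
    (X : Type u) [AddCommGroup X] [Module Rᵐᵒᵖ X] (g : N → X) :
    (cRel (R := R) q Dv bv).Holds X g ↔ (0 : X) = ∑ l, Dv l • g (bv l) := by
  constructor
  · rintro ⟨x, hx⟩
    have h : ∑ k : Fin 0, (Fin.elim0 k : Rᵐᵒᵖ) • x k = ∑ l, Dv l • g (bv l) := hx ⟨0, Nat.zero_lt_one⟩
    simpa using h
  · intro h
    exact ⟨fun k => k.elim0, fun j => by
      show ∑ k : Fin 0, (Fin.elim0 k : Rᵐᵒᵖ) • (Fin.elim0 k : X) = ∑ l, Dv l • g (bv l)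
      simpa using h⟩

lemma sum_ite_id {X : Type u} [AddCommGroup X] [Module Rᵐᵒᵖ X] {m : ℕ} (g : Fin m → X)
    (j : Fin m) : (∑ l', (if j = l' then (1 : Rᵐᵒᵖ) else 0) • g l') = g j := by
  rw [Finset.sum_congr rfl fun l' (_ : l' ∈ Finset.univ) =>
    show (if j = l' then (1 : Rᵐᵒᵖ) else 0) • g l' = if j = l' then g l' else 0 from by
      rw [ite_smul, one_smul, zero_smul]]
  rw [Finset.sum_ite_eq Finset.univ j g, if_pos (Finset.mem_univ j)]

lemma sum3 {N X : Type u} [AddCommGroup X] [Module Rᵐᵒᵖ X] (g : N → X) (v1 v2 v3 : N) :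
    (∑ l, (![1, 1, -1] : Fin 3 → Rᵐᵒᵖ) l • g ((![v1, v2, v3] : Fin 3 → N) l))
      = g v1 + g v2 - g v3 := by
  rw [Fin.sum_univ_three]
  show (1 : Rᵐᵒᵖ) • g v1 + (1 : Rᵐᵒᵖ) • g v2 + (-1 : Rᵐᵒᵖ) • g v3 = _
  rw [one_smul, one_smul, neg_smul, one_smul, ← sub_eq_add_neg]

lemma sum2 {N X : Type u} [AddCommGroup X] [Module Rᵐᵒᵖ X] (g : N → X) (s : Rᵐᵒᵖ)
    (v1 v2 : N) :
    (∑ l, (![s, -1] : Fin 2 → Rᵐᵒᵖ) l • g ((![v1, v2] : Fin 2 → N) l)) = s • g v1 - g v2 := by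
  rw [Fin.sum_univ_two]
  show s • g v1 + (-1 : Rᵐᵒᵖ) • g v2 = _
  rw [neg_smul, one_smul, ← sub_eq_add_neg]

lemma sum1 {N X : Type u} [AddCommGroup X] [Module Rᵐᵒᵖ X] (g : N → X) (v1 : N) :
    (∑ l, (![1] : Fin 1 → Rᵐᵒᵖ) l • g ((![v1] : Fin 1 → N) l)) = g v1 := by
  rw [Fin.sum_univ_one]
  show (1 : Rᵐᵒᵖ) • g v1 = _
  rw [one_smul]

lemma forward_aux (P : ModuleCat.{u} Rᵐᵒᵖ → Prop)
    (hiso : ∀ (N N' : ModuleCat.{u} Rᵐᵒᵖ), P N → ((N : Type u) ≃ₗ[Rᵐᵒᵖ] (N' : Type u)) → P N')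
    (hprod : ProdClosed Rᵐᵒᵖ P)
    (hdir : DirLimClosed Rᵐᵒᵖ P)
    (M0 : ModuleCat.{u} Rᵐᵒᵖ) (hM : P M0)
    (hpureclosed : PureSubClosed Rᵐᵒᵖ P) :
    P (ModuleCat.of Rᵐᵒᵖ (Character (Character (M0 : Type u)))) := by
  classical
  set M : Type u := (M0 : Type u) with hMdef
  set N : Type u := Character (Character M) with hNdef
  set T : Type u := {c : Cstr R N // c.Holds N id} with hTdef
  set NegC : Type u := {c : Cstr R N // ¬ c.Holds N id} with hNegCdef
  set J : Type u := Finset T × NegC with hJdef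
  have hex : ∀ p : J, ∃ w : N → M,
      (∀ c : T, c ∈ p.1 → c.1.Holds M w) ∧ ¬ p.2.1.Holds M w := by
    intro p
    obtain ⟨w, hw1, hw2⟩ := key_lemma (M := M) (Finset.image (fun c : T => c.1) p.1)
      (fun c hc => by
        obtain ⟨c', _, rfl⟩ := Finset.mem_image.mp hc
        exact c'.2)
      p.2.1 p.2.2
    exact ⟨w, fun c hc => hw1 c.1 (Finset.mem_image_of_mem _ hc), hw2⟩
  choose W hW1 hW2 using hex
  set ι : Type u := Finset T with hιdef
  haveI : Nonempty ι := ⟨∅⟩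
  set G : ι → Type u := fun S => {p : J // S ≤ p.1} → M with hGdef
  set f : ∀ i j : ι, i ≤ j → G i →ₗ[Rᵐᵒᵖ] G j := fun i j hij =>
    { toFun := fun g p => g ⟨p.1, le_trans hij p.2⟩
      map_add' := fun g g' => rfl
      map_smul' := fun s g => rfl } with hfdef
  haveI hds : DirectedSystem G (fun i j h => f i j h) :=
    ⟨fun _ _ => rfl, fun _ _ _ _ _ _ => rfl⟩
  set L : Type u := Module.DirectLimit G f with hLdef
  have hLP : P (ModuleCat.of Rᵐᵒᵖ L) := by
    refine hdir ι G f ?_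
    intro S
    exact hprod {p : J // S ≤ p.1} (fun _ => M0) (fun _ => hM)
  -- the canonical map into the direct limit
  set ε0 : N → L := fun v => Module.DirectLimit.of Rᵐᵒᵖ ι G f ∅ (fun p => W p.1 v) with hε0
  have hofzero : ∀ (d : G ∅) (S' : ι),
      (∀ p : J, S' ≤ p.1 → d ⟨p, Finset.empty_subset _⟩ = 0) →
      Module.DirectLimit.of Rᵐᵒᵖ ι G f ∅ d = 0 := by
    intro d S' hd
    have h1 : Module.DirectLimit.of Rᵐᵒᵖ ι G f ∅ d
        = Module.DirectLimit.of Rᵐᵒᵖ ι G f S' (f ∅ S' (Finset.empty_subset S') d) :=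
      (Module.DirectLimit.of_f (hij := Finset.empty_subset S') (x := d)).symm
    rw [h1]
    have h2 : f ∅ S' (Finset.empty_subset S') d = 0 := funext fun p => hd p.1 p.2
    rw [h2, map_zero]
  have hadd : ∀ v v', ε0 (v + v') = ε0 v + ε0 v' := by
    intro v v'
    have hc : (cRel (R := R) 3 ![1, 1, -1] ![v, v', v + v']).Holds N id := by
      rw [cRel_holds_iff, sum3]
      show (0 : N) = v + v' - (v + v')
      rw [sub_self]
    rw [hε0, ← map_add, ← sub_eq_zero, ← map_sub]
    refine hofzero _ {(⟨_, hc⟩ : T)} ?_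
    intro p hp
    have hh := (cRel_holds_iff (R := R) 3 ![1, 1, -1] ![v, v', v + v'] M (W p)).mp
      (hW1 p ⟨_, hc⟩ (hp (Finset.mem_singleton_self _)))
    have h3 : W p v + W p v' = W p (v + v') :=
      sub_eq_zero.mp (hh.trans (sum3 (W p) v v' (v + v'))).symm
    show W p (v + v') - (W p v + W p v') = 0
    rw [← h3, sub_self]
  have hsmul : ∀ (s : Rᵐᵒᵖ) (v : N), ε0 (s • v) = s • ε0 v := by
    intro s v
    have hc : (cRel (R := R) 2 ![s, -1] ![v, s • v]).Holds N id := by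
      rw [cRel_holds_iff, sum2]
      show (0 : N) = s • v - s • v
      rw [sub_self]
    rw [hε0, ← map_smul, ← sub_eq_zero, ← map_sub]
    refine hofzero _ {(⟨_, hc⟩ : T)} ?_
    intro p hp
    have hh := (cRel_holds_iff (R := R) 2 ![s, -1] ![v, s • v] M (W p)).mp
      (hW1 p ⟨_, hc⟩ (hp (Finset.mem_singleton_self _)))
    have h3 : s • W p v = W p (s • v) :=
      sub_eq_zero.mp (hh.trans (sum2 (W p) s v (s • v))).symm
    show W p (s • v) - s • W p v = 0
    rw [← h3, sub_self]
  set ε : N →ₗ[Rᵐᵒᵖ] L :=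
    { toFun := ε0
      map_add' := hadd
      map_smul' := fun s v => by rw [RingHom.id_apply]; exact hsmul s v } with hεdef
  have hinj : Function.Injective ε := by
    refine (injective_iff_map_eq_zero ε).mpr ?_
    intro v hv
    by_contra hvne
    have hnu : ¬ (cRel (R := R) 1 ![1] ![v]).Holds N id := by
      rw [cRel_holds_iff, sum1]
      exact fun h => hvne h.symm
    obtain ⟨S', hS', hzero⟩ := Module.DirectLimit.of.zero_exact hv
    set p : J := (S', ⟨_, hnu⟩) with hpdef
    have hWp0 : W p v = 0 := congrFun hzero ⟨p, le_refl S'⟩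
    refine hW2 p ?_
    rw [cRel_holds_iff, sum1]
    exact hWp0.symm
  have hpureε : IsPureEmbedding Rᵐᵒᵖ ε := by
    refine ⟨hinj, ?_⟩
    intro m n r l hsol
    by_contra hno
    set νc : Cstr R N := ⟨m, n, m, fun j k => r j k, fun j l' => if j = l' then 1 else 0, l⟩
      with hνcdef
    have hνN : ¬ νc.Holds N id := by
      rintro ⟨y, hy⟩
      refine hno ⟨y, fun j => ?_⟩
      have h : (∑ k, r j k • y k) = ∑ l', (if j = l' then (1 : Rᵐᵒᵖ) else 0) • id (l l') := hy j
      rwa [sum_ite_id (fun l' => id (l l')) j] at h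
    obtain ⟨x, hx⟩ := hsol
    have hex2 : ∀ k : Fin n, ∃ (i : ι) (gk : G i),
        Module.DirectLimit.of Rᵐᵒᵖ ι G f i gk = x k :=
      fun k => Module.DirectLimit.exists_of (x k)
    choose i0 gk hgk using hex2
    set S0 : ι := Finset.univ.sup i0 with hS0def
    have hle : ∀ k, i0 k ≤ S0 := fun k => Finset.le_sup (Finset.mem_univ k)
    set gk' : Fin n → G S0 := fun k => f (i0 k) S0 (hle k) (gk k) with hgk'def
    have hgk' : ∀ k, Module.DirectLimit.of Rᵐᵒᵖ ι G f S0 (gk' k) = x k := fun k => by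
      show Module.DirectLimit.of Rᵐᵒᵖ ι G f S0 (f (i0 k) S0 (hle k) (gk k)) = x k
      rw [Module.DirectLimit.of_f (hij := hle k)]
      exact hgk k
    have hj : ∀ j : Fin m, ∃ (Sj : ι) (hSj : S0 ≤ Sj), f S0 Sj hSj
        ((∑ k, r j k • gk' k) - f ∅ S0 (Finset.empty_subset S0) (fun p => W p.1 (l j))) = 0 := by
      intro j
      have heq : Module.DirectLimit.of Rᵐᵒᵖ ι G f S0
          ((∑ k, r j k • gk' k) - f ∅ S0 (Finset.empty_subset S0) (fun p => W p.1 (l j))) = 0 := by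
        rw [map_sub, sub_eq_zero, Module.DirectLimit.of_f (hij := Finset.empty_subset S0), map_sum]
        rw [Finset.sum_congr rfl fun k (_ : k ∈ Finset.univ) =>
          (map_smul (Module.DirectLimit.of Rᵐᵒᵖ ι G f S0) (r j k) (gk' k) :
            Module.DirectLimit.of Rᵐᵒᵖ ι G f S0 (r j k • gk' k) = _)]
        rw [Finset.sum_congr rfl fun k (_ : k ∈ Finset.univ) =>
          congrArg (fun z => r j k • z) (hgk' k)]
        rw [hx j]
        rfl
      exact Module.DirectLimit.of.zero_exact heq
    choose Sj hSj hSjz using hj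
    set S' : ι := S0 ⊔ Finset.univ.sup Sj with hS'def
    set pstar : J := (S', ⟨νc, hνN⟩) with hpstardef
    have hS0le : S0 ≤ S' := le_sup_left
    have hSjle : ∀ j, Sj j ≤ S' := fun j =>
      le_trans (Finset.le_sup (Finset.mem_univ j)) le_sup_right
    set q0 : {p : J // S0 ≤ p.1} := ⟨pstar, hS0le⟩ with hq0def
    have h5 : ∀ j, (∑ k, r j k • gk' k) q0 - W pstar (l j) = 0 := fun j =>
      congrFun (hSjz j) ⟨pstar, hSjle j⟩
    have h6 : ∀ j, (∑ k, r j k • gk' k) q0 = ∑ k, r j k • gk' k q0 := by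
      intro j
      rw [Finset.sum_apply]
      rfl
    refine hW2 pstar ⟨fun k => gk' k q0, fun j => ?_⟩
    show (∑ k, r j k • gk' k q0) = ∑ l', (if j = l' then (1 : Rᵐᵒᵖ) else 0) • W pstar (l l')
    rw [sum_ite_id (fun l' => W pstar (l l')) j, ← h6 j]
    exact sub_eq_zero.mp (h5 j)
  exact hpureclosed (ModuleCat.of Rᵐᵒᵖ N) (ModuleCat.of Rᵐᵒᵖ L) ε hpureε hLP

end PPAux


/-- The class of left `R`-modules whose character module lies in `P`. -/
def Sclass {R : Type u} [Ring R] (P : ModuleCat.{u} Rᵐᵒᵖ → Prop) :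
    ModuleCat.{u} R → Prop :=
  fun M => P (ModuleCat.of Rᵐᵒᵖ (Character (M : Type u)))

theorem definable_P_gives_dual_pair
    {R : Type u} [Ring R] (P : ModuleCat.{u} Rᵐᵒᵖ → Prop)
    (hiso : ∀ (N N' : ModuleCat.{u} Rᵐᵒᵖ), P N → ((N : Type u) ≃ₗ[Rᵐᵒᵖ] (N' : Type u)) → P N')
    (hprod : ProdClosed Rᵐᵒᵖ P)
    (hsummand : ∀ (N N' : ModuleCat.{u} Rᵐᵒᵖ), P N' →
      IsDirectSummand Rᵐᵒᵖ (N : Type u) (N' : Type u) → P N)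
    (hdef : IsDefinable Rᵐᵒᵖ P) :
    ∀ N : ModuleCat.{u} Rᵐᵒᵖ,
      P N ↔ Sclass P (ModuleCat.of R (Character (N : Type u))) := by
  intro N
  constructor
  · intro hN
    exact PPAux.forward_aux P hiso hprod hdef.2.1 N hN hdef.2.2
  · intro hS
    exact hdef.2.2 N (ModuleCat.of Rᵐᵒᵖ (Character (Character (N : Type u))))
      (PPAux.evHom (N : Type u)) (PPAux.evHom_pure (N : Type u)) hS

end
end
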